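/- arXiv:1505.05600 — 4 statements merged into one kernel-verified Lean document; each statement's English description precedes it below -/
import Mathlib

section
/- Let H be a separable complex Hilbert space and A a non-negative injective self-adjoint operator on H. If g : [0,∞) → ℝ is of bounded variation and G(t) = ∫₀ᵗ g(s) ds, then for every u ∈ H, the time averages (1/T) ∫₀ᵀ g(t) exp(i G(t) A^{1/2}) u dt converge to 0 in norm as T → ∞. -/
open MeasureTheory Filter Topology Set Function

/-- The right limit of a monotone function is right-continuous (value within `Ioi`). -/
lemma rightLim_rightLim_eq {f : ℝ → ℝ} (hf : Monotone f) (t : ℝ) :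
    rightLim (rightLim f) t = rightLim f t := by
  have hne : (𝓝[>] t) ≠ ⊥ := (nhdsGT_neBot t).ne'
  refine le_antisymm ?_ (hf.rightLim.le_rightLim le_rfl)
  rw [hf.rightLim.rightLim_eq_sInf, hf.rightLim_eq_sInf]
  refine le_csInf (by simp [Set.nonempty_Ioi]) ?_
  rintro b ⟨s', hs', rfl⟩
  have h1 : t < (t + s') / 2 := by simp at hs' ⊢; linarith
  have h2 : (t + s') / 2 < s' := by simp at hs' ⊢; linarith
  calc sInf (rightLim f '' Ioi t) ≤ rightLim f ((t + s') / 2) :=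
        csInf_le (hf.rightLim.map_bddBelow bddBelow_Ioi) ⟨_, h1, rfl⟩
    _ ≤ f s' := hf.rightLim_le h2

lemma rightLim_continuousWithinAt {f : ℝ → ℝ} (hf : Monotone f) (t : ℝ) :
    ContinuousWithinAt (rightLim f) (Set.Ioi t) t :=
  hf.rightLim.continuousWithinAt_Ioi_iff_rightLim_eq.2 (rightLim_rightLim_eq hf t)

/-- Mean ergodic lemma (Lemma 2 of the paper): for a non-negative injective
self-adjoint operator `A` on a separable complex Hilbert space `H`, with
`U s = exp(i s A^{1/2})` the generated strongly continuous unitary group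
(encoded via its group, isometry, continuity, derivative-on-domain and
dense-range-of-generator properties), if `g` is of bounded variation on `[0,∞)`
and `G t = ∫₀ᵗ g`, then `(1/T) ∫₀ᵀ g t • U (G t) u dt → 0` in norm as `T → ∞`. -/
theorem stmt0 {H : Type*} [NormedAddCommGroup H] [InnerProductSpace ℂ H]
    [CompleteSpace H] [TopologicalSpace.SeparableSpace H]
    (U : ℝ → H →L[ℂ] H)
    (hgrp : ∀ s t : ℝ, U (s + t) = (U s).comp (U t))
    (h0 : U 0 = ContinuousLinearMap.id ℂ H)
    (hiso : ∀ (s : ℝ) (x : H), ‖U s x‖ = ‖x‖)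
    (hcont : ∀ x : H, Continuous fun s : ℝ => U s x)
    (D : Set H) (S : H → H)
    (hder : ∀ w ∈ D, ∀ s : ℝ, HasDerivAt (fun r : ℝ => U r w) (Complex.I • U s (S w)) s)
    (hSdense : Dense (S '' D))
    (g : ℝ → ℝ) (hg : BoundedVariationOn g (Set.Ici 0))
    (G : ℝ → ℝ) (hG : ∀ t : ℝ, G t = ∫ s in (0:ℝ)..t, g s)
    (u : H) :
    Tendsto (fun T : ℝ => ‖(1 / T : ℝ) • ∫ t in (0:ℝ)..T, g t • U (G t) u‖)
      atTop (𝓝 0) := by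
  classical
  -- monotone decomposition of `g` on `Ici 0`, globalized via `max · 0`
  obtain ⟨p, q, hp, hq, hpq⟩ :=
    hg.locallyBoundedVariationOn.exists_monotoneOn_sub_monotoneOn
  set m : ℝ → ℝ := fun t => max t 0 with hm
  have hmem : ∀ t : ℝ, m t ∈ Set.Ici (0:ℝ) := fun t => Set.mem_Ici.mpr (le_max_right _ _)
  have hmmono : Monotone m := fun a b hab => max_le_max hab le_rfl
  have hP : Monotone (p ∘ m) := fun a b hab => hp (hmem a) (hmem b) (hmmono hab)
  have hQ : Monotone (q ∘ m) := fun a b hab => hq (hmem a) (hmem b) (hmmono hab)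
  set h : ℝ → ℝ := fun t => rightLim (p ∘ m) t - rightLim (q ∘ m) t with hh
  have hgm : ∀ t : ℝ, g (m t) = (p ∘ m) t - (q ∘ m) t := fun t => by
    have := congrFun hpq (m t); simpa using this
  -- `h` is the right-continuous modification of `g ∘ m`
  have hlim : ∀ t : ℝ, Tendsto (fun s => g (m s)) (𝓝[>] t) (𝓝 (h t)) := by
    intro t
    have := (hP.tendsto_rightLim t).sub (hQ.tendsto_rightLim t)
    refine this.congr fun s => (hgm s).symm
  -- `h = g ∘ m` away from a countable set
  have hcount : Set.Countable {t : ℝ | h t ≠ g (m t)} := by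
    refine ((hP.countable_not_continuousAt.union hQ.countable_not_continuousAt).mono ?_)
    intro t ht
    simp only [Set.mem_setOf_eq] at ht
    by_contra hc
    simp only [Set.mem_union, Set.mem_setOf_eq, not_or, not_not] at hc
    apply ht
    have e1 : rightLim (p ∘ m) t = (p ∘ m) t :=
      hP.continuousWithinAt_Ioi_iff_rightLim_eq.1 hc.1.continuousWithinAt
    have e2 : rightLim (q ∘ m) t = (q ∘ m) t :=
      hQ.continuousWithinAt_Ioi_iff_rightLim_eq.1 hc.2.continuousWithinAt
    rw [hh]; simp only [e1, e2]; rw [hgm t]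
  have hae : ∀ᵐ t : ℝ, h t = g (m t) := by
    have h0' := hcount.measure_zero (μ := volume)
    exact measure_mono_null (fun t ht => by simpa using ht) h0'
  -- measurability and right-continuity of `h`
  have hmeas : Measurable h := hP.rightLim.measurable.sub hQ.rightLim.measurable
  have hsm : StronglyMeasurable h := hmeas.stronglyMeasurable
  have hrc : ∀ t : ℝ, ContinuousWithinAt h (Set.Ioi t) t := fun t =>
    (rightLim_continuousWithinAt hP t).sub (rightLim_continuousWithinAt hQ t)
  -- uniform bound
  obtain ⟨M, hM0, hMg⟩ : ∃ M : ℝ, 0 ≤ M ∧ ∀ t ∈ Set.Ici (0:ℝ), |g t| ≤ M := by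
    refine ⟨|g 0| + (eVariationOn g (Set.Ici 0)).toReal, by positivity, fun t ht => ?_⟩
    have h1 : dist (g t) (g 0) ≤ (eVariationOn g (Set.Ici 0)).toReal := by
      rw [dist_edist]
      exact ENNReal.toReal_mono hg (eVariationOn.edist_le g ht Set.self_mem_Ici)
    rw [Real.dist_eq] at h1
    have := abs_sub_abs_le_abs_sub (g t) (g 0)
    linarith
  have hMh : ∀ t : ℝ, |h t| ≤ M := by
    intro t
    refine le_of_tendsto ((hlim t).abs) ?_
    exact Eventually.of_forall fun s => hMg _ (hmem s)
  -- integrability of `h`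
  have hint : ∀ a b : ℝ, IntervalIntegrable h volume a b := by
    intro a b
    refine (intervalIntegrable_const (c := M)).mono_fun hsm.aestronglyMeasurable.restrict ?_
    refine Eventually.of_forall fun t => ?_
    simpa [Real.norm_eq_abs, abs_of_nonneg hM0] using hMh t
  -- the modified primitive
  set Γ : ℝ → ℝ := fun t => ∫ s in (0:ℝ)..t, h s with hΓ
  have hΓcont : Continuous Γ := intervalIntegral.continuous_primitive hint 0
  have hΓG : ∀ t : ℝ, 0 ≤ t → G t = Γ t := by
    intro t ht
    rw [hG t, hΓ]
    refine intervalIntegral.integral_congr_ae ?_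
    filter_upwards [hae] with s hs hmem'
    rw [Set.uIoc_of_le ht] at hmem'
    rw [hs, hm]
    simp [max_eq_left hmem'.1.le]
  -- right derivative of `Γ` is `h`
  have hΓd : ∀ t : ℝ, HasDerivWithinAt Γ (h t) (Set.Ici t) t := by
    intro t
    exact intervalIntegral.integral_hasDerivWithinAt_right (hint 0 t)
      ⟨Set.univ, univ_mem, hsm.aestronglyMeasurable.restrict⟩ (hrc t)
  -- family of integrands
  set f : H → ℝ → H := fun x t => h t • U (Γ t) x with hf
  have hfcont : ∀ x : H, Continuous fun t => U (Γ t) x := fun x => (hcont x).comp hΓcont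
  have hfsm : ∀ x : H, StronglyMeasurable (f x) := fun x =>
    hsm.smul ((hfcont x).stronglyMeasurable)
  have hfnorm : ∀ x : H, ∀ t : ℝ, ‖f x t‖ ≤ M * ‖x‖ := by
    intro x t
    rw [hf]
    simp only [norm_smul, Real.norm_eq_abs, hiso]
    exact mul_le_mul_of_nonneg_right (hMh t) (norm_nonneg x)
  have hfint : ∀ x : H, ∀ a b : ℝ, IntervalIntegrable (f x) volume a b := by
    intro x a b
    refine (intervalIntegrable_const (c := M * ‖x‖)).mono_fun
      (hfsm x).aestronglyMeasurable.restrict ?_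
    refine Eventually.of_forall fun t => ?_
    rw [Real.norm_eq_abs]
    exact le_trans (hfnorm x t) (le_abs_self _)
  -- norms of partial integrals
  have hnorm_int : ∀ x : H, ∀ T : ℝ, 0 ≤ T → ‖∫ t in (0:ℝ)..T, f x t‖ ≤ M * ‖x‖ * T := by
    intro x T hT
    have := intervalIntegral.norm_integral_le_of_norm_le_const
      (C := M * ‖x‖) (f := f x) (a := 0) (b := T) (fun t _ => hfnorm x t)
    simpa [abs_of_nonneg hT] using this
  -- key identity via vanishing right derivative
  have hkey : ∀ w ∈ D, ∀ T : ℝ, 0 ≤ T → ‖∫ t in (0:ℝ)..T, f (S w) t‖ ≤ 2 * ‖w‖ := by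
    intro w hw T hT
    set φ : ℝ → H := fun r => ∫ t in (0:ℝ)..r, f (S w) t with hφ
    have hφcont : Continuous φ := intervalIntegral.continuous_primitive (hfint (S w)) 0
    set ψ : ℝ → H := fun r => U (Γ r) w - Complex.I • φ r with hψ
    have hψd : ∀ r : ℝ, HasDerivWithinAt ψ 0 (Set.Ici r) r := by
      intro r
      have hd1 : HasDerivWithinAt (fun y => U (Γ y) w)
          (h r • (Complex.I • U (Γ r) (S w))) (Set.Ici r) r :=
        (hder w hw (Γ r)).scomp_hasDerivWithinAt r (hΓd r)
      have hrc' : ContinuousWithinAt (f (S w)) (Set.Ioi r) r := by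
        refine ContinuousWithinAt.smul ?_ ((hfcont (S w)).continuousAt.continuousWithinAt)
        exact (continuous_algebraMap ℝ ℂ).continuousAt.comp_continuousWithinAt (hrc r)
      have hd2 : HasDerivWithinAt φ (f (S w) r) (Set.Ici r) r :=
        intervalIntegral.integral_hasDerivWithinAt_right (hfint (S w) 0 r)
          ⟨Set.univ, univ_mem, (hfsm (S w)).aestronglyMeasurable.restrict⟩ hrc'
      have := hd1.sub (hd2.const_smul Complex.I)
      convert this using 1
      · rfl
      rw [hf]
      simp only [smul_comm (h r) Complex.I]
      abel
    have hψc : ∀ x ∈ Set.Icc (0:ℝ) T, ψ x = ψ 0 := by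
      refine constant_of_has_deriv_right_zero ?_ fun x _ => hψd x
      exact Continuous.continuousOn (((hcont w).comp hΓcont).sub (continuous_const.smul hφcont))
    have hΓ0 : Γ 0 = 0 := intervalIntegral.integral_same
    have hφ0 : φ 0 = 0 := intervalIntegral.integral_same
    have hψ0 : ψ 0 = w := by
      show U (Γ 0) w - Complex.I • φ 0 = w
      rw [hΓ0, hφ0, smul_zero, sub_zero, h0]
      rfl
    have h1 := hψc T ⟨hT, le_rfl⟩
    rw [hψ0] at h1
    have h2 : U (Γ T) w - Complex.I • φ T = w := h1
    have : Complex.I • φ T = U (Γ T) w - w := eq_sub_of_add_eq' (sub_eq_iff_eq_add.mp h2).symm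
    have hn : ‖Complex.I • φ T‖ = ‖φ T‖ := by
      rw [norm_smul, Complex.norm_I, one_mul]
    calc ‖φ T‖ = ‖U (Γ T) w - w‖ := by rw [← hn, this]
      _ ≤ ‖U (Γ T) w‖ + ‖w‖ := norm_sub_le _ _
      _ = 2 * ‖w‖ := by rw [hiso]; ring
  -- rewrite the target integrand
  have htarget : ∀ T : ℝ, 0 ≤ T →
      (∫ t in (0:ℝ)..T, g t • U (G t) u) = ∫ t in (0:ℝ)..T, f u t := by
    intro T hT
    refine intervalIntegral.integral_congr_ae ?_
    filter_upwards [hae] with s hs hmem'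
    rw [Set.uIoc_of_le hT] at hmem'
    have hs0 : (0:ℝ) ≤ s := hmem'.1.le
    have hgs : g s = h s := by rw [hs, hm]; simp [max_eq_left hs0]
    show g s • U (G s) u = h s • U (Γ s) u
    rw [hgs, hΓG s hs0]
  -- final epsilon argument
  rw [Metric.tendsto_atTop]
  intro ε hε
  obtain ⟨v, ⟨w, hw, rfl⟩, hv⟩ := hSdense.exists_dist_lt u (show (0:ℝ) < ε / (2 * (M + 1)) by positivity)
  rw [dist_eq_norm] at hv
  refine ⟨max 1 (4 * ‖w‖ / ε), fun T hTN => ?_⟩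
  have hT1 : (1:ℝ) ≤ T := le_trans (le_max_left _ _) hTN
  have hT0 : (0:ℝ) < T := lt_of_lt_of_le one_pos hT1
  have hTw : 4 * ‖w‖ / ε ≤ T := le_trans (le_max_right _ _) hTN
  rw [Real.dist_eq, sub_zero, abs_of_nonneg (norm_nonneg _)]
  rw [htarget T hT0.le]
  -- split u = (u - S w) + S w
  have hsplit : (∫ t in (0:ℝ)..T, f u t)
      = (∫ t in (0:ℝ)..T, f (u - S w) t) + ∫ t in (0:ℝ)..T, f (S w) t := by
    rw [← intervalIntegral.integral_add (hfint (u - S w) 0 T) (hfint (S w) 0 T)]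
    refine intervalIntegral.integral_congr fun t _ => ?_
    show h t • U (Γ t) u = h t • U (Γ t) (u - S w) + h t • U (Γ t) (S w)
    rw [map_sub, smul_sub]
    abel
  rw [hsplit, smul_add]
  have hb1 : ‖(1 / T : ℝ) • ∫ t in (0:ℝ)..T, f (u - S w) t‖ ≤ M * ‖u - S w‖ := by
    rw [norm_smul, Real.norm_eq_abs, abs_of_nonneg (by positivity : (0:ℝ) ≤ 1 / T)]
    calc (1 / T) * ‖∫ t in (0:ℝ)..T, f (u - S w) t‖
        ≤ (1 / T) * (M * ‖u - S w‖ * T) := by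
          exact mul_le_mul_of_nonneg_left (hnorm_int _ T hT0.le) (by positivity)
      _ = M * ‖u - S w‖ := by field_simp
  have hb2 : ‖(1 / T : ℝ) • ∫ t in (0:ℝ)..T, f (S w) t‖ ≤ 2 * ‖w‖ / T := by
    rw [norm_smul, Real.norm_eq_abs, abs_of_nonneg (by positivity : (0:ℝ) ≤ 1 / T)]
    calc (1 / T) * ‖∫ t in (0:ℝ)..T, f (S w) t‖ ≤ (1 / T) * (2 * ‖w‖) :=
          mul_le_mul_of_nonneg_left (hkey w hw T hT0.le) (by positivity)
      _ = 2 * ‖w‖ / T := by ring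
  have hstep1 : M * ‖u - S w‖ < ε / 2 := by
    have h1 : M * ‖u - S w‖ ≤ M * (ε / (2 * (M + 1))) :=
      mul_le_mul_of_nonneg_left hv.le hM0
    have h2 : M * (ε / (2 * (M + 1))) < ε / 2 := by
      rw [← mul_div_assoc, div_lt_div_iff₀ (by positivity) (by norm_num : (0:ℝ) < 2)]
      nlinarith
    linarith
  have hstep2 : 2 * ‖w‖ / T ≤ ε / 2 := by
    have h4 : 4 * ‖w‖ ≤ ε * T := by
      rw [div_le_iff₀ hε] at hTw; linarith
    rw [div_le_div_iff₀ hT0 (by norm_num : (0:ℝ) < 2)]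
    linarith
  refine lt_of_le_of_lt (norm_add_le _ _) ?_
  linarith
end

section
/- Let H be a separable complex Hilbert space, A a non-negative injective self-adjoint operator and c* > 0. For φ, ψ ∈ H, set v₁(t) = exp(i c* t A^{1/2})φ + exp(-i c* t A^{1/2})ψ and v₂(t) = i c* exp(i c* t A^{1/2})φ - i c* exp(-i c* t A^{1/2})ψ. Then c*² · lim_{T→∞} (1/T)∫₀ᵀ ‖v₁(t)‖² dt = lim_{T→∞} (1/T)∫₀ᵀ ‖v₂(t)‖² dt, and both limits equal c*² (‖φ‖² + ‖ψ‖²). -/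
open MeasureTheory Filter Topology intervalIntegral

section Aux

variable {H : Type*} [NormedAddCommGroup H] [InnerProductSpace ℂ H] [CompleteSpace H]

local notation "⟪" x ", " y "⟫" => @inner ℂ _ _ x y

private lemma dense_span_aux (U : ℝ → H →L[ℂ] H)
    (hadj : ∀ (s : ℝ) (x y : H), (inner ℂ (U s x) y : ℂ) = inner ℂ x (U (-s) y))
    (hfix : ∀ x : H, (∀ t : ℝ, U t x = x) → x = 0) :
    (Submodule.span ℂ {y : H | ∃ s x, U s x - x = y}).topologicalClosure = ⊤ := by
  rw [Submodule.topologicalClosure_eq_top_iff, Submodule.eq_bot_iff]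
  intro y hy
  refine hfix y fun t => ?_
  have h1 : ∀ (s : ℝ) (x : H), ⟪U s x - x, y⟫ = 0 := fun s x =>
    (Submodule.mem_orthogonal _ y).1 hy _ (Submodule.subset_span ⟨s, x, rfl⟩)
  have h2 : ∀ (s : ℝ), U (-s) y = y := by
    intro s
    refine ext_inner_left ℂ fun x => ?_
    have := h1 s x
    rw [inner_sub_left, sub_eq_zero, hadj] at this
    exact this
  simpa using h2 (-t)

private lemma avg_tendsto_zero (U : ℝ → H →L[ℂ] H)
    (hgrp : ∀ s t : ℝ, U (s + t) = (U s).comp (U t))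
    (hiso : ∀ (s : ℝ) (x : H), ‖U s x‖ = ‖x‖)
    (hadj : ∀ (s : ℝ) (x y : H), (inner ℂ (U s x) y : ℂ) = inner ℂ x (U (-s) y))
    (hcont : ∀ x : H, Continuous fun s : ℝ => U s x)
    (hfix : ∀ x : H, (∀ t : ℝ, U t x = x) → x = 0)
    (ψ φ : H) :
    Tendsto (fun T : ℝ => (1 / T : ℂ) * ∫ t in (0:ℝ)..T, ⟪U t φ, ψ⟫)
      atTop (𝓝 0) := by
  have hcont' : ∀ χ : H, Continuous fun t : ℝ => (⟪U t χ, ψ⟫ : ℂ) := fun χ =>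
    (hcont χ).inner continuous_const
  have hInt : ∀ (χ : H) (a b : ℝ),
      IntervalIntegrable (fun t : ℝ => (⟪U t χ, ψ⟫ : ℂ)) volume a b := fun χ a b =>
    (hcont' χ).intervalIntegrable a b
  have hbound : ∀ (χ : H) (t : ℝ), ‖(⟪U t χ, ψ⟫ : ℂ)‖ ≤ ‖χ‖ * ‖ψ‖ := by
    intro χ t
    calc ‖(⟪U t χ, ψ⟫ : ℂ)‖ ≤ ‖U t χ‖ * ‖ψ‖ := norm_inner_le_norm _ _
      _ = ‖χ‖ * ‖ψ‖ := by rw [hiso]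
  -- Step A: generators
  have stepA : ∀ (s : ℝ) (x : H),
      Tendsto (fun T : ℝ => (1 / T : ℂ) * ∫ t in (0:ℝ)..T, ⟪U t (U s x - x), ψ⟫)
        atTop (𝓝 0) := by
    intro s x
    set C : ℝ := ‖x‖ * ‖ψ‖ with hC
    have hC0 : 0 ≤ C := mul_nonneg (norm_nonneg _) (norm_nonneg _)
    have key : ∀ T : ℝ,
        (∫ t in (0:ℝ)..T, ⟪U t (U s x - x), ψ⟫)
          = (∫ t in T..(T + s), ⟪U t x, ψ⟫) - ∫ t in (0:ℝ)..s, ⟪U t x, ψ⟫ := by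
      intro T
      have e1 : (∫ t in (0:ℝ)..T, ⟪U t (U s x - x), ψ⟫)
          = (∫ t in (0:ℝ)..T, ⟪U (t + s) x, ψ⟫) - ∫ t in (0:ℝ)..T, ⟪U t x, ψ⟫ := by
        rw [← intervalIntegral.integral_sub _ (hInt x 0 T)]
        · refine intervalIntegral.integral_congr fun t _ => ?_
          rw [map_sub, inner_sub_left, hgrp t s]
          rfl
        · exact (((hcont x).comp (continuous_id.add continuous_const)).inner
            continuous_const).intervalIntegrable 0 T
      have e2 : (∫ t in (0:ℝ)..T, ⟪U (t + s) x, ψ⟫)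
          = ∫ t in s..(T + s), ⟪U t x, ψ⟫ := by
        have := intervalIntegral.integral_comp_add_right (a := (0:ℝ)) (b := T)
          (fun t : ℝ => (⟪U t x, ψ⟫ : ℂ)) s
        simpa using this
      have h3 : (∫ t in (0:ℝ)..s, ⟪U t x, ψ⟫) + ∫ t in s..(T + s), ⟪U t x, ψ⟫
          = ∫ t in (0:ℝ)..(T + s), ⟪U t x, ψ⟫ :=
        intervalIntegral.integral_add_adjacent_intervals (hInt x 0 s) (hInt x s (T + s))
      have h4 : (∫ t in (0:ℝ)..T, ⟪U t x, ψ⟫) + ∫ t in T..(T + s), ⟪U t x, ψ⟫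
          = ∫ t in (0:ℝ)..(T + s), ⟪U t x, ψ⟫ :=
        intervalIntegral.integral_add_adjacent_intervals (hInt x 0 T) (hInt x T (T + s))
      rw [e1, e2]
      linear_combination h3 - h4
    have bnd : ∀ᶠ T : ℝ in atTop,
        ‖(1 / T : ℂ) * ∫ t in (0:ℝ)..T, ⟪U t (U s x - x), ψ⟫‖ ≤ (1 / T) * (2 * (C * |s|)) := by
      filter_upwards [eventually_gt_atTop (0:ℝ)] with T hT
      rw [key, norm_mul]
      have n1 : ‖(∫ t in T..(T + s), ⟪U t x, ψ⟫)‖ ≤ C * |s| := by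
        simpa using intervalIntegral.norm_integral_le_of_norm_le_const
          (C := C) (f := fun t : ℝ => (⟪U t x, ψ⟫ : ℂ)) (a := T) (b := T + s)
          (fun t _ => hbound x t)
      have n2 : ‖(∫ t in (0:ℝ)..s, ⟪U t x, ψ⟫)‖ ≤ C * |s| := by
        simpa using intervalIntegral.norm_integral_le_of_norm_le_const
          (C := C) (f := fun t : ℝ => (⟪U t x, ψ⟫ : ℂ)) (a := 0) (b := s)
          (fun t _ => hbound x t)
      have hnT : ‖(1 / T : ℂ)‖ = 1 / T := by
        rw [norm_div, norm_one, Complex.norm_real, Real.norm_eq_abs, abs_of_pos hT]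
      rw [hnT]
      have : ‖(∫ t in T..(T + s), ⟪U t x, ψ⟫) - ∫ t in (0:ℝ)..s, ⟪U t x, ψ⟫‖
          ≤ 2 * (C * |s|) := by
        calc _ ≤ ‖(∫ t in T..(T + s), ⟪U t x, ψ⟫)‖ + ‖(∫ t in (0:ℝ)..s, ⟪U t x, ψ⟫)‖ :=
              norm_sub_le _ _
          _ ≤ 2 * (C * |s|) := by linarith
      have h1T : 0 ≤ 1 / T := le_of_lt (by positivity)
      exact mul_le_mul_of_nonneg_left this h1T
    refine squeeze_zero_norm' bnd ?_
    simpa [one_div] using tendsto_inv_atTop_zero.mul_const (2 * (C * |s|))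
  -- Step B: span
  have stepB : ∀ φ' ∈ Submodule.span ℂ {y : H | ∃ s x, U s x - x = y},
      Tendsto (fun T : ℝ => (1 / T : ℂ) * ∫ t in (0:ℝ)..T, ⟪U t φ', ψ⟫) atTop (𝓝 0) := by
    intro φ' hφ'
    induction hφ' using Submodule.span_induction with
    | mem y hy =>
        obtain ⟨s, x, rfl⟩ := hy
        exact stepA s x
    | zero => simpa using tendsto_const_nhds
    | add a b _ _ ha hb =>
        have : ∀ T : ℝ, (1 / T : ℂ) * ∫ t in (0:ℝ)..T, ⟪U t (a + b), ψ⟫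
            = ((1 / T : ℂ) * ∫ t in (0:ℝ)..T, ⟪U t a, ψ⟫)
              + (1 / T : ℂ) * ∫ t in (0:ℝ)..T, ⟪U t b, ψ⟫ := by
          intro T
          rw [← mul_add, ← intervalIntegral.integral_add (hInt a 0 T) (hInt b 0 T)]
          congr 1
          refine intervalIntegral.integral_congr fun t _ => ?_
          rw [map_add, inner_add_left]
        exact (ha.add hb).congr (fun T => (this T).symm) |>.mono_right (by simp)
    | smul c a _ ha =>
        have : ∀ T : ℝ, (1 / T : ℂ) * ∫ t in (0:ℝ)..T, ⟪U t (c • a), ψ⟫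
            = (starRingEnd ℂ) c * ((1 / T : ℂ) * ∫ t in (0:ℝ)..T, ⟪U t a, ψ⟫) := by
          intro T
          have : (∫ t in (0:ℝ)..T, ⟪U t (c • a), ψ⟫)
              = (starRingEnd ℂ) c * ∫ t in (0:ℝ)..T, ⟪U t a, ψ⟫ := by
            rw [← intervalIntegral.integral_const_mul]
            refine intervalIntegral.integral_congr fun t _ => ?_
            rw [_root_.map_smul, inner_smul_left]
          rw [this]; ring
        exact (ha.const_mul ((starRingEnd ℂ) c)).congr (fun T => (this T).symm)
          |>.mono_right (by simp)
  -- Step C: approximation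
  rw [NormedAddCommGroup.tendsto_nhds_zero]
  intro ε hε
  have hδ : 0 < ε / (2 * (‖ψ‖ + 1)) := by positivity
  have hdense : φ ∈ closure ((Submodule.span ℂ {y : H | ∃ s x, U s x - x = y} : Submodule ℂ H) : Set H) := by
    have := dense_span_aux U hadj hfix
    rw [← Submodule.topologicalClosure_coe, this]
    trivial
  obtain ⟨φ', hφ'mem, hφ'close⟩ := Metric.mem_closure_iff.1 hdense _ hδ
  have hlim := stepB φ' hφ'mem
  rw [NormedAddCommGroup.tendsto_nhds_zero] at hlim
  filter_upwards [hlim (ε / 2) (by positivity), eventually_gt_atTop (0:ℝ)] with T hT1 hT2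
  have hdiff : ‖((1 / T : ℂ) * ∫ t in (0:ℝ)..T, ⟪U t φ, ψ⟫)
      - (1 / T : ℂ) * ∫ t in (0:ℝ)..T, ⟪U t φ', ψ⟫‖ < ε / 2 := by
    have e : ((1 / T : ℂ) * ∫ t in (0:ℝ)..T, ⟪U t φ, ψ⟫)
        - (1 / T : ℂ) * ∫ t in (0:ℝ)..T, ⟪U t φ', ψ⟫
        = (1 / T : ℂ) * ∫ t in (0:ℝ)..T, ⟪U t (φ - φ'), ψ⟫ := by
      rw [← mul_sub, ← intervalIntegral.integral_sub (hInt φ 0 T) (hInt φ' 0 T)]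
      congr 1
      refine intervalIntegral.integral_congr fun t _ => ?_
      rw [map_sub, inner_sub_left]
    rw [e, norm_mul]
    have hnT : ‖(1 / T : ℂ)‖ = 1 / T := by
      rw [norm_div, norm_one, Complex.norm_real, Real.norm_eq_abs, abs_of_pos hT2]
    rw [hnT]
    have n1 : ‖(∫ t in (0:ℝ)..T, ⟪U t (φ - φ'), ψ⟫)‖ ≤ (‖φ - φ'‖ * ‖ψ‖) * |T - 0| :=
      intervalIntegral.norm_integral_le_of_norm_le_const fun t _ => hbound (φ - φ') t
    have habs : |T - 0| = T := by rw [sub_zero, abs_of_pos hT2]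
    rw [habs] at n1
    calc (1 / T) * ‖(∫ t in (0:ℝ)..T, ⟪U t (φ - φ'), ψ⟫)‖
        ≤ (1 / T) * ((‖φ - φ'‖ * ‖ψ‖) * T) := by
          exact mul_le_mul_of_nonneg_left n1 (by positivity)
      _ = ‖φ - φ'‖ * ‖ψ‖ := by field_simp
      _ < ε / 2 := by
          have h1 : ‖φ - φ'‖ < ε / (2 * (‖ψ‖ + 1)) := by
            rw [← dist_eq_norm]; exact hφ'close
          have h2 : ‖ψ‖ < ‖ψ‖ + 1 := by linarith
          calc ‖φ - φ'‖ * ‖ψ‖ ≤ ‖φ - φ'‖ * (‖ψ‖ + 1) := by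
                exact mul_le_mul_of_nonneg_left (le_of_lt h2) (norm_nonneg _)
            _ < (ε / (2 * (‖ψ‖ + 1))) * (‖ψ‖ + 1) := by
                exact mul_lt_mul_of_pos_right h1 (by positivity)
            _ = ε / 2 := by field_simp
  calc ‖(1 / T : ℂ) * ∫ t in (0:ℝ)..T, ⟪U t φ, ψ⟫‖
      = ‖(((1 / T : ℂ) * ∫ t in (0:ℝ)..T, ⟪U t φ, ψ⟫)
          - (1 / T : ℂ) * ∫ t in (0:ℝ)..T, ⟪U t φ', ψ⟫)
          + (1 / T : ℂ) * ∫ t in (0:ℝ)..T, ⟪U t φ', ψ⟫‖ := by rw [sub_add_cancel]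
    _ ≤ ‖((1 / T : ℂ) * ∫ t in (0:ℝ)..T, ⟪U t φ, ψ⟫)
          - (1 / T : ℂ) * ∫ t in (0:ℝ)..T, ⟪U t φ', ψ⟫‖
        + ‖(1 / T : ℂ) * ∫ t in (0:ℝ)..T, ⟪U t φ', ψ⟫‖ := norm_add_le _ _
    _ < ε / 2 + ε / 2 := add_lt_add hdiff hT1
    _ = ε := by ring

end Aux

/-- For the strongly continuous unitary group `U s = exp(i s A^{1/2})` generated by
`A^{1/2}`, with `A` non-negative injective self-adjoint on a separable complex Hilbert
space (injectivity encoded by: the only common fixed vector of the group is `0`),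
`c* > 0`, `v₁(t) = U(c* t)φ + U(-(c* t))ψ` and `v₂(t) = i c* U(c* t)φ - i c* U(-(c* t))ψ`,
the time averages of `‖v₁‖²` and `‖v₂‖²` converge, `c*²·lim (1/T)∫₀ᵀ‖v₁‖² = lim (1/T)∫₀ᵀ‖v₂‖²`,
and both limits equal `c*²(‖φ‖² + ‖ψ‖²)`. -/
theorem stmt4 {H : Type*} [NormedAddCommGroup H] [InnerProductSpace ℂ H]
    [CompleteSpace H] [TopologicalSpace.SeparableSpace H]
    (U : ℝ → H →L[ℂ] H)
    (hgrp : ∀ s t : ℝ, U (s + t) = (U s).comp (U t))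
    (h0 : U 0 = ContinuousLinearMap.id ℂ H)
    (hiso : ∀ (s : ℝ) (x : H), ‖U s x‖ = ‖x‖)
    (hadj : ∀ (s : ℝ) (x y : H), (inner ℂ (U s x) y : ℂ) = inner ℂ x (U (-s) y))
    (hcont : ∀ x : H, Continuous fun s : ℝ => U s x)
    (hfix : ∀ x : H, (∀ t : ℝ, U t x = x) → x = 0)
    (cs : ℝ) (hcs : 0 < cs) (φ ψ : H) :
    Tendsto (fun T : ℝ =>
        (1 / T) * ∫ t in (0:ℝ)..T, ‖U (cs * t) φ + U (-(cs * t)) ψ‖ ^ 2)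
      atTop (𝓝 (‖φ‖ ^ 2 + ‖ψ‖ ^ 2)) ∧
    Tendsto (fun T : ℝ =>
        (1 / T) * ∫ t in (0:ℝ)..T,
          ‖(Complex.I * cs) • U (cs * t) φ - (Complex.I * cs) • U (-(cs * t)) ψ‖ ^ 2)
      atTop (𝓝 (cs ^ 2 * (‖φ‖ ^ 2 + ‖ψ‖ ^ 2))) := by
  set c2 : ℝ := 2 * cs with hc2def
  have hc2 : 0 < c2 := by positivity
  -- the complex average tends to zero
  have h2 : Tendsto (fun T : ℝ =>
      (1 / T : ℂ) * ∫ t in (0:ℝ)..T, (inner ℂ (U (c2 * t) φ) ψ : ℂ)) atTop (𝓝 0) := by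
    refine avg_tendsto_zero (fun t => U (c2 * t)) ?_ ?_ ?_ ?_ ?_ ψ φ
    · intro s t; rw [mul_add, hgrp]
    · intro s x; exact hiso _ x
    · intro s x y; rw [mul_neg]; exact hadj _ x y
    · intro x; exact (hcont x).comp (continuous_const.mul continuous_id)
    · intro x hx
      refine hfix x fun t => ?_
      have h := hx (t / c2)
      rwa [mul_div_cancel₀ _ (ne_of_gt hc2)] at h
  -- the real average
  have hcontf : Continuous fun t : ℝ => (inner ℂ (U (c2 * t) φ) ψ : ℂ) :=
    (((hcont φ).comp (continuous_const.mul continuous_id)).inner continuous_const)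
  have h3 : Tendsto (fun T : ℝ =>
      (1 / T) * ∫ t in (0:ℝ)..T, (inner ℂ (U (c2 * t) φ) ψ : ℂ).re) atTop (𝓝 0) := by
    have := (Complex.continuous_re.tendsto 0).comp h2
    simp only [Function.comp_def, Complex.zero_re] at this
    refine this.congr fun T => ?_
    have hcast : (1 / T : ℂ) = ((1 / T : ℝ) : ℂ) := by push_cast; ring
    rw [hcast, Complex.re_ofReal_mul]
    congr 1
    exact (Complex.reCLM.intervalIntegral_comp_comm (hcontf.intervalIntegrable 0 T)).symm
  -- key inner product identity
  have hinner : ∀ t : ℝ, (inner ℂ (U (cs * t) φ) (U (-(cs * t)) ψ) : ℂ)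
      = inner ℂ (U (c2 * t) φ) ψ := by
    intro t
    rw [hadj, hadj (c2 * t)]
    congr 1
    have harg : -(c2 * t) = -(cs * t) + -(cs * t) := by rw [hc2def]; ring
    rw [harg, hgrp]
    rfl
  set c : ℝ := ‖φ‖ ^ 2 + ‖ψ‖ ^ 2 with hcdef
  have expand1 : ∀ t : ℝ, ‖U (cs * t) φ + U (-(cs * t)) ψ‖ ^ 2
      = c + 2 * (inner ℂ (U (c2 * t) φ) ψ : ℂ).re := by
    intro t
    have := norm_add_sq (𝕜 := ℂ) (U (cs * t) φ) (U (-(cs * t)) ψ)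
    rw [hiso, hiso, hinner] at this
    rw [this, hcdef]
    simp only [RCLike.re_to_complex]
    ring
  have expand2 : ∀ t : ℝ,
      ‖(Complex.I * cs) • U (cs * t) φ - (Complex.I * cs) • U (-(cs * t)) ψ‖ ^ 2
      = cs ^ 2 * (c - 2 * (inner ℂ (U (c2 * t) φ) ψ : ℂ).re) := by
    intro t
    rw [← smul_sub, norm_smul]
    have habs : ‖Complex.I * (cs : ℂ)‖ = cs := by
      rw [norm_mul, Complex.norm_I, Complex.norm_real, one_mul, Real.norm_eq_abs,
        abs_of_pos hcs]
    rw [habs, mul_pow]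
    congr 1
    have := norm_sub_sq (𝕜 := ℂ) (U (cs * t) φ) (U (-(cs * t)) ψ)
    rw [hiso, hiso, hinner] at this
    rw [this, hcdef]
    simp only [RCLike.re_to_complex]
    ring
  have hIntRe : ∀ T : ℝ, IntervalIntegrable
      (fun t : ℝ => (inner ℂ (U (c2 * t) φ) ψ : ℂ).re) volume 0 T := fun T =>
    (Complex.continuous_re.comp hcontf).intervalIntegrable 0 T
  have I1 : ∀ T : ℝ, (∫ t in (0:ℝ)..T, ‖U (cs * t) φ + U (-(cs * t)) ψ‖ ^ 2)
      = T * c + 2 * ∫ t in (0:ℝ)..T, (inner ℂ (U (c2 * t) φ) ψ : ℂ).re := by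
    intro T
    rw [intervalIntegral.integral_congr (g := fun t : ℝ =>
        c + 2 * (inner ℂ (U (c2 * t) φ) ψ : ℂ).re) (fun t _ => expand1 t)]
    rw [intervalIntegral.integral_add (intervalIntegrable_const)
        ((hIntRe T).const_mul 2), intervalIntegral.integral_const,
        intervalIntegral.integral_const_mul]
    simp [smul_eq_mul]
    try ring
  have I2 : ∀ T : ℝ, (∫ t in (0:ℝ)..T,
      ‖(Complex.I * cs) • U (cs * t) φ - (Complex.I * cs) • U (-(cs * t)) ψ‖ ^ 2)
      = cs ^ 2 * (T * c) - (2 * cs ^ 2) * ∫ t in (0:ℝ)..T,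
          (inner ℂ (U (c2 * t) φ) ψ : ℂ).re := by
    intro T
    rw [intervalIntegral.integral_congr (g := fun t : ℝ =>
        cs ^ 2 * c - (2 * cs ^ 2) * (inner ℂ (U (c2 * t) φ) ψ : ℂ).re)
        (fun t _ => by rw [expand2 t]; ring)]
    rw [intervalIntegral.integral_sub (intervalIntegrable_const)
        ((hIntRe T).const_mul (2 * cs ^ 2)), intervalIntegral.integral_const,
        intervalIntegral.integral_const_mul]
    simp [smul_eq_mul]
    try ring
  constructor
  · have base : Tendsto (fun T : ℝ =>
        c + 2 * ((1 / T) * ∫ t in (0:ℝ)..T, (inner ℂ (U (c2 * t) φ) ψ : ℂ).re))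
        atTop (𝓝 (c + 2 * 0)) := tendsto_const_nhds.add (h3.const_mul 2)
    rw [mul_zero, add_zero] at base
    refine Tendsto.congr' ?_ base
    filter_upwards [eventually_gt_atTop (0:ℝ)] with T hT
    rw [I1]
    field_simp
  · have base : Tendsto (fun T : ℝ =>
        cs ^ 2 * c - (2 * cs ^ 2) * ((1 / T) * ∫ t in (0:ℝ)..T,
          (inner ℂ (U (c2 * t) φ) ψ : ℂ).re))
        atTop (𝓝 (cs ^ 2 * c - (2 * cs ^ 2) * 0)) :=
      tendsto_const_nhds.sub (h3.const_mul (2 * cs ^ 2))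
    rw [mul_zero, sub_zero] at base
    refine Tendsto.congr' ?_ base
    filter_upwards [eventually_gt_atTop (0:ℝ)] with T hT
    rw [I2]
    field_simp
end

section
/- Let H be a separable complex Hilbert space, A a non-negative injective self-adjoint operator, and c : [0,∞) → ℝ of bounded variation with inf_{t≥0} c(t) > 0 and limit c_∞ = lim_{t→∞} c(t). Let τ(t) = ∫₀ᵗ c(s)ds. For y₁, y₂ ∈ H with (y₁,y₂) ≠ (0,0), set w₁(t) = exp(iτ(t)A^{1/2})y₁ + exp(-iτ(t)A^{1/2})y₂ and w₂(t) = i c(t) exp(iτ(t)A^{1/2})y₁ - i c(t) exp(-iτ(t)A^{1/2})y₂. Then (1/T)∫₀ᵀ ‖w₂(t)‖² dt → c_∞²(‖y₁‖² + ‖y₂‖²) and c_∞²·(1/T)∫₀ᵀ ‖w₁(t)‖² dt → c_∞²(‖y₁‖²+‖y₂‖²) as T→∞, and this common limit is nonzero. -/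
open MeasureTheory Filter Topology

private lemma cesaro_zero {g : ℝ → ℝ}
    (hint : ∀ T : ℝ, 0 ≤ T → IntervalIntegrable g volume 0 T)
    {M : ℝ} (hM : ∀ t : ℝ, 0 ≤ t → |g t| ≤ M)
    (hg : Tendsto g atTop (𝓝 0)) :
    Tendsto (fun T : ℝ => (1 / T) * ∫ t in (0:ℝ)..T, g t) atTop (𝓝 0) := by
  have hM0 : 0 ≤ M := (abs_nonneg _).trans (hM 0 le_rfl)
  rw [Metric.tendsto_nhds]
  intro ε hε
  have hev : ∀ᶠ t in atTop, |g t| ≤ ε / 2 := by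
    have := Metric.tendsto_nhds.mp hg (ε / 2) (by positivity)
    filter_upwards [this] with t ht
    rw [Real.dist_eq, sub_zero] at ht
    exact ht.le
  obtain ⟨T₀', h1⟩ := eventually_atTop.mp hev
  set T₀ : ℝ := max T₀' 0 with hT₀def
  have hT₀0 : 0 ≤ T₀ := le_max_right _ _
  have hsm : Tendsto (fun T : ℝ => M * T₀ * (1 / T)) atTop (𝓝 0) := by
    simpa [one_div] using tendsto_inv_atTop_zero.const_mul (M * T₀)
  filter_upwards [eventually_ge_atTop (max T₀ 1),
    hsm.eventually_lt_const (show (0:ℝ) < ε / 2 by positivity)] with T hT hsmall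
  have hT1 : (1:ℝ) ≤ T := le_trans (le_max_right _ _) hT
  have hT0 : (0:ℝ) < T := lt_of_lt_of_le one_pos hT1
  have hTT₀ : T₀ ≤ T := le_trans (le_max_left _ _) hT
  have i1 : IntervalIntegrable g volume 0 T₀ := hint T₀ hT₀0
  have i2 : IntervalIntegrable g volume T₀ T := i1.symm.trans (hint T hT0.le)
  have hsplit : (∫ t in (0:ℝ)..T, g t) = (∫ t in (0:ℝ)..T₀, g t) + ∫ t in T₀..T, g t :=
    (intervalIntegral.integral_add_adjacent_intervals i1 i2).symm
  have b1 : ‖∫ t in (0:ℝ)..T₀, g t‖ ≤ M * |T₀ - 0| := by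
    apply intervalIntegral.norm_integral_le_of_norm_le_const
    intro x hx
    rw [Set.uIoc_of_le hT₀0] at hx
    exact hM x hx.1.le
  have b2 : ‖∫ t in T₀..T, g t‖ ≤ (ε / 2) * |T - T₀| := by
    apply intervalIntegral.norm_integral_le_of_norm_le_const
    intro x hx
    rw [Set.uIoc_of_le hTT₀] at hx
    exact h1 x (le_trans (le_max_left _ _) hx.1.le)
  rw [Real.dist_eq, sub_zero, abs_mul, abs_of_nonneg (by positivity : (0:ℝ) ≤ 1 / T)]
  have habs : |∫ t in (0:ℝ)..T, g t| ≤ M * T₀ + (ε / 2) * (T - T₀) := by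
    rw [hsplit]
    calc |(∫ t in (0:ℝ)..T₀, g t) + ∫ t in T₀..T, g t|
        ≤ |∫ t in (0:ℝ)..T₀, g t| + |∫ t in T₀..T, g t| := abs_add_le _ _
      _ ≤ M * |T₀ - 0| + (ε / 2) * |T - T₀| := add_le_add b1 b2
      _ = M * T₀ + (ε / 2) * (T - T₀) := by
          rw [sub_zero, abs_of_nonneg hT₀0, abs_of_nonneg (by linarith)]
  calc (1 / T) * |∫ t in (0:ℝ)..T, g t|
      ≤ (1 / T) * (M * T₀ + (ε / 2) * (T - T₀)) := by
        apply mul_le_mul_of_nonneg_left habs (by positivity)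
    _ = M * T₀ * (1 / T) + (ε / 2) * ((T - T₀) * (1 / T)) := by ring
    _ < ε / 2 + (ε / 2) * 1 := by
        have h3 : (T - T₀) * (1 / T) ≤ 1 := by
          rw [one_div]
          calc (T - T₀) * T⁻¹ ≤ T * T⁻¹ := by
                apply mul_le_mul_of_nonneg_right (by linarith) (by positivity)
            _ = 1 := mul_inv_cancel₀ hT0.ne'
        have h4 : (ε / 2) * ((T - T₀) * (1 / T)) ≤ (ε / 2) * 1 :=
          mul_le_mul_of_nonneg_left h3 (by positivity)
        linarith
    _ = ε := by ring

private lemma cesaro {g : ℝ → ℝ}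
    (hint : ∀ T : ℝ, 0 ≤ T → IntervalIntegrable g volume 0 T)
    {M L : ℝ} (hM : ∀ t : ℝ, 0 ≤ t → |g t| ≤ M)
    (hg : Tendsto g atTop (𝓝 L)) :
    Tendsto (fun T : ℝ => (1 / T) * ∫ t in (0:ℝ)..T, g t) atTop (𝓝 L) := by
  have h0 : Tendsto (fun T : ℝ => (1 / T) * ∫ t in (0:ℝ)..T, (g t - L)) atTop (𝓝 0) := by
    apply cesaro_zero (fun T hT => (hint T hT).sub intervalIntegrable_const)
      (M := M + |L|) (fun t ht => (abs_sub _ _).trans (add_le_add_left (hM t ht) _))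
    simpa using hg.sub_const L
  have h2 : Tendsto (fun T : ℝ => (1 / T) * (∫ t in (0:ℝ)..T, (g t - L)) + L) atTop (𝓝 (0 + L)) :=
    h0.add_const L
  rw [zero_add] at h2
  apply h2.congr'
  filter_upwards [eventually_ge_atTop 1] with T hT
  have hT0 : (0:ℝ) < T := lt_of_lt_of_le one_pos hT
  rw [intervalIntegral.integral_sub (hint T hT0.le) intervalIntegrable_const,
    intervalIntegral.integral_const]
  simp only [sub_zero, smul_eq_mul]
  field_simp
  ring

/-- For the strongly continuous unitary group `U s = exp(i s A^{1/2})` generated by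
`A^{1/2}`, `A` non-negative injective self-adjoint on a separable complex Hilbert space
(encoded via group, isometry, adjoint, continuity, fixed-point-triviality and the
generator derivative/dense-range properties), a bounded-variation coefficient `c`
with `inf c > 0` and `c → c∞`, `τ(t) = ∫₀ᵗ c`, and `(y₁, y₂) ≠ (0,0)`:
with `w₁(t) = U(τ t)y₁ + U(-τ t)y₂` and `w₂(t) = i c(t) U(τ t)y₁ - i c(t) U(-τ t)y₂`,
the time averages of `‖w₂‖²` and `c∞²‖w₁‖²` both converge to
`c∞²(‖y₁‖² + ‖y₂‖²)`, which is nonzero. -/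
theorem stmt5 {H : Type*} [NormedAddCommGroup H] [InnerProductSpace ℂ H]
    [CompleteSpace H] [TopologicalSpace.SeparableSpace H]
    (U : ℝ → H →L[ℂ] H)
    (hgrp : ∀ s t : ℝ, U (s + t) = (U s).comp (U t))
    (h0 : U 0 = ContinuousLinearMap.id ℂ H)
    (hiso : ∀ (s : ℝ) (x : H), ‖U s x‖ = ‖x‖)
    (hadj : ∀ (s : ℝ) (x y : H), (inner ℂ (U s x) y : ℂ) = inner ℂ x (U (-s) y))
    (hcont : ∀ x : H, Continuous fun s : ℝ => U s x)
    (hfix : ∀ x : H, (∀ t : ℝ, U t x = x) → x = 0)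
    (D : Set H) (S : H → H)
    (hder : ∀ w ∈ D, ∀ s : ℝ, HasDerivAt (fun r : ℝ => U r w) (Complex.I • U s (S w)) s)
    (hSdense : Dense (S '' D))
    (c : ℝ → ℝ) (hbv : BoundedVariationOn c (Set.Ici 0))
    (c₀ : ℝ) (hc₀ : 0 < c₀) (hcge : ∀ t : ℝ, 0 ≤ t → c₀ ≤ c t)
    (cinf : ℝ) (hcinf : Tendsto c atTop (𝓝 cinf))
    (τ : ℝ → ℝ) (hτ : ∀ t : ℝ, τ t = ∫ s in (0:ℝ)..t, c s)
    (y₁ y₂ : H) (hne : ¬(y₁ = 0 ∧ y₂ = 0)) :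
    Tendsto (fun T : ℝ =>
        (1 / T) * ∫ t in (0:ℝ)..T,
          ‖(Complex.I * (c t : ℂ)) • U (τ t) y₁
            - (Complex.I * (c t : ℂ)) • U (-(τ t)) y₂‖ ^ 2)
      atTop (𝓝 (cinf ^ 2 * (‖y₁‖ ^ 2 + ‖y₂‖ ^ 2))) ∧
    Tendsto (fun T : ℝ =>
        cinf ^ 2 * ((1 / T) * ∫ t in (0:ℝ)..T, ‖U (τ t) y₁ + U (-(τ t)) y₂‖ ^ 2))
      atTop (𝓝 (cinf ^ 2 * (‖y₁‖ ^ 2 + ‖y₂‖ ^ 2))) ∧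
    cinf ^ 2 * (‖y₁‖ ^ 2 + ‖y₂‖ ^ 2) ≠ 0 := by
  classical
  -- positivity facts
  have hcinfpos : 0 < cinf :=
    lt_of_lt_of_le hc₀ (ge_of_tendsto hcinf (eventually_atTop.mpr ⟨0, fun t ht => hcge t ht⟩))
  have hcne : cinf ≠ 0 := ne_of_gt hcinfpos
  have hNpos : 0 < ‖y₁‖ ^ 2 + ‖y₂‖ ^ 2 := by
    rcases not_and_or.mp hne with h | h
    · have h1 : 0 < ‖y₁‖ := norm_pos_iff.mpr h
      have := pow_pos h1 2
      nlinarith [sq_nonneg ‖y₂‖]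
    · have h1 : 0 < ‖y₂‖ := norm_pos_iff.mpr h
      have := pow_pos h1 2
      nlinarith [sq_nonneg ‖y₁‖]
  -- bound on c
  set M : ℝ := |c 0| + (eVariationOn c (Set.Ici 0)).toReal with hMdef
  have hcb : ∀ t : ℝ, 0 ≤ t → |c t| ≤ M := by
    intro t ht
    have h1 := hbv.dist_le (Set.mem_Ici.mpr ht) (Set.mem_Ici.mpr (le_refl (0:ℝ)))
    rw [Real.dist_eq] at h1
    have h2 : c t = c 0 + (c t - c 0) := by ring
    rw [h2]
    exact (abs_add_le _ _).trans (add_le_add_right h1 _)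
  have hM0 : 0 ≤ M := (abs_nonneg _).trans (hcb 0 le_rfl)
  have hMcinf : |cinf| ≤ M :=
    le_of_tendsto hcinf.abs (eventually_atTop.mpr ⟨0, fun t ht => hcb t ht⟩)
  -- Jordan decomposition and monotone extensions
  obtain ⟨p, q, hp, hq, hpq⟩ := hbv.locallyBoundedVariationOn.exists_monotoneOn_sub_monotoneOn
  set p' : ℝ → ℝ := fun t => p (max t 0) with hp'def
  set q' : ℝ → ℝ := fun t => q (max t 0) with hq'def
  have hp'mono : Monotone p' := fun a b hab =>
    hp (Set.mem_Ici.mpr (le_max_right a 0)) (Set.mem_Ici.mpr (le_max_right b 0))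
      (max_le_max hab le_rfl)
  have hq'mono : Monotone q' := fun a b hab =>
    hq (Set.mem_Ici.mpr (le_max_right a 0)) (Set.mem_Ici.mpr (le_max_right b 0))
      (max_le_max hab le_rfl)
  have hcpq : ∀ t : ℝ, 0 ≤ t → c t = p' t - q' t := by
    intro t ht
    have h1 := congrFun hpq t
    simp only [Pi.sub_apply] at h1
    simp only [hp'def, hq'def, max_eq_left ht]
    exact h1
  -- integrability of c on [0, T]
  have hsub : ∀ T : ℝ, 0 ≤ T → Set.uIcc (0:ℝ) T ⊆ Set.Ici 0 := by
    intro T hT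
    rw [Set.uIcc_of_le hT]
    exact Set.Icc_subset_Ici_self
  have hcintT : ∀ T : ℝ, 0 ≤ T → IntervalIntegrable c volume 0 T := by
    intro T hT
    have h1 : IntervalIntegrable (fun x => p x - q x) volume 0 T :=
      ((hp.mono (hsub T hT)).intervalIntegrable).sub
        ((hq.mono (hsub T hT)).intervalIntegrable)
    rw [hpq]
    exact h1
  -- measurability of c on (0, ∞)
  have hmeasIoi : AEStronglyMeasurable c (volume.restrict (Set.Ioi (0:ℝ))) := by
    have h1 : AEStronglyMeasurable (fun t => p' t - q' t) (volume.restrict (Set.Ioi (0:ℝ))) :=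
      (hp'mono.measurable.sub hq'mono.measurable).aestronglyMeasurable
    apply h1.congr
    rw [Filter.EventuallyEq, ae_restrict_iff' measurableSet_Ioi]
    exact ae_of_all _ fun t ht => (hcpq t (le_of_lt ht)).symm
  -- countable exceptional set
  set E : Set ℝ := {x | ¬ContinuousAt p' x} ∪ {x | ¬ContinuousAt q' x} with hEdef
  have hEcount : E.Countable :=
    hp'mono.countable_not_continuousAt.union hq'mono.countable_not_continuousAt
  have hccontAt : ∀ t : ℝ, 0 < t → t ∉ E → ContinuousAt c t := by
    intro t ht htE
    have h1 : ContinuousAt p' t := by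
      by_contra h; exact htE (Or.inl h)
    have h2 : ContinuousAt q' t := by
      by_contra h; exact htE (Or.inr h)
    have hev : (fun u => p' u - q' u) =ᶠ[𝓝 t] c :=
      eventually_of_mem (Ioi_mem_nhds ht) fun u hu => (hcpq u (le_of_lt hu)).symm
    exact (h1.sub h2).congr hev
  -- derivative of τ off the countable set
  have hτfun : τ = fun u => ∫ s in (0:ℝ)..u, c s := funext hτ
  have hτd : ∀ t : ℝ, 0 < t → t ∉ E → HasDerivAt τ (c t) t := by
    intro t ht htE
    rw [hτfun]
    exact intervalIntegral.integral_hasDerivAt_right (hcintT t ht.le)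
      ⟨Set.Ioi 0, Ioi_mem_nhds ht, hmeasIoi⟩ (hccontAt t ht htE)
  -- continuity of τ on [0, T]
  have hτcont : ∀ T : ℝ, 0 ≤ T → ContinuousOn τ (Set.Icc 0 T) := by
    intro T hT
    have h1 : IntegrableOn c (Set.uIcc (0:ℝ) T) volume := by
      rw [Set.uIcc_of_le hT]
      exact (intervalIntegrable_iff_integrableOn_Icc_of_le hT).mp (hcintT T hT)
    have h2 := intervalIntegral.continuousOn_primitive_interval h1
    rw [Set.uIcc_of_le hT] at h2
    exact h2.congr fun u _ => hτ u
  -- continuity of the orbit maps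
  have hUτcont : ∀ (x : H) (T : ℝ), 0 ≤ T →
      ContinuousOn (fun t => U (-(2 * τ t)) x) (Set.Icc 0 T) := by
    intro x T hT
    exact (hcont x).comp_continuousOn ((continuousOn_const.mul (hτcont T hT)).neg)
  -- the correlation function G
  set G : ℝ → ℝ := fun t => (inner ℂ y₁ (U (-(2 * τ t)) y₂) : ℂ).re with hGdef
  have hGcont : ∀ T : ℝ, 0 ≤ T → ContinuousOn G (Set.Icc 0 T) := fun T hT =>
    Complex.continuous_re.comp_continuousOn (continuousOn_const.inner (hUτcont y₂ T hT))
  set K : ℝ := ‖y₁‖ * ‖y₂‖ with hKdef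
  have hCS : ∀ (x : H) (s : ℝ), ‖(inner ℂ y₁ (U s x) : ℂ)‖ ≤ ‖y₁‖ * ‖x‖ := by
    intro x s
    refine (norm_inner_le_norm _ _).trans ?_
    rw [hiso]
  have hGb : ∀ t : ℝ, |G t| ≤ K := by
    intro t
    calc |G t| ≤ ‖(inner ℂ y₁ (U (-(2 * τ t)) y₂) : ℂ)‖ := Complex.abs_re_le_norm _
      _ = ‖(inner ℂ y₁ (U (-(2 * τ t)) y₂) : ℂ)‖ := rfl
      _ ≤ K := hCS y₂ _
  have hK0 : 0 ≤ K := le_trans (abs_nonneg _) (hGb 0)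
  -- integrability package
  have hintG : ∀ T : ℝ, 0 ≤ T → IntervalIntegrable G volume 0 T := by
    intro T hT
    apply ContinuousOn.intervalIntegrable
    rw [Set.uIcc_of_le hT]; exact hGcont T hT
  have hintc2 : ∀ T : ℝ, 0 ≤ T → IntervalIntegrable (fun t => (c t) ^ 2) volume 0 T := by
    intro T hT
    rw [intervalIntegrable_iff_integrableOn_Ioc_of_le hT]
    have ham : AEStronglyMeasurable c (volume.restrict (Set.Ioc (0:ℝ) T)) :=
      hmeasIoi.mono_measure (Measure.restrict_mono Set.Ioc_subset_Ioi_self le_rfl)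
    refine Integrable.mono' (integrable_const (M ^ 2))
      ((ham.mul ham).congr (ae_of_all _ fun t => (pow_two (c t)).symm)) ?_
    rw [ae_restrict_iff' measurableSet_Ioc]
    refine ae_of_all _ fun t ht => ?_
    calc ‖(c t) ^ 2‖ = |c t| ^ 2 := by rw [Real.norm_eq_abs, abs_pow]
      _ ≤ M ^ 2 := pow_le_pow_left₀ (abs_nonneg _) (hcb t ht.1.le) 2
  have hintcG : ∀ T : ℝ, 0 ≤ T → IntervalIntegrable (fun t => c t * G t) volume 0 T := by
    intro T hT
    exact (hcintT T hT).mul_continuousOn (by rw [Set.uIcc_of_le hT]; exact hGcont T hT)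
  have hintcinfcG : ∀ T : ℝ, 0 ≤ T →
      IntervalIntegrable (fun t => (cinf - c t) * G t) volume 0 T := by
    intro T hT
    exact ((intervalIntegrable_const (μ := volume) (a := (0:ℝ)) (b := T) (c := cinf)).sub (hcintT T hT)).mul_continuousOn
      (by rw [Set.uIcc_of_le hT]; exact hGcont T hT)
  have hintc2G : ∀ T : ℝ, 0 ≤ T →
      IntervalIntegrable (fun t => (c t) ^ 2 * G t) volume 0 T := fun T hT =>
    (hintc2 T hT).mul_continuousOn (by rw [Set.uIcc_of_le hT]; exact hGcont T hT)
  have hintc2cinfG : ∀ T : ℝ, 0 ≤ T →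
      IntervalIntegrable (fun t => ((c t) ^ 2 - cinf ^ 2) * G t) volume 0 T := by
    intro T hT
    exact ((hintc2 T hT).sub intervalIntegrable_const).mul_continuousOn
      (by rw [Set.uIcc_of_le hT]; exact hGcont T hT)
  -- complex integrand integrability
  have hHcont : ∀ (x : H) (T : ℝ), 0 ≤ T →
      ContinuousOn (fun t => (inner ℂ y₁ (U (-(2 * τ t)) x) : ℂ)) (Set.Icc 0 T) :=
    fun x T hT => continuousOn_const.inner (hUτcont x T hT)
  have hintPhi : ∀ (x : H) (T : ℝ), 0 ≤ T →
      IntervalIntegrable (fun t => (c t : ℂ) * inner ℂ y₁ (U (-(2 * τ t)) x)) volume 0 T := by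
    intro x T hT
    have h1 : IntervalIntegrable (fun t => (c t : ℂ)) volume 0 T :=
      ⟨Complex.ofRealCLM.integrable_comp (hcintT T hT).1,
       Complex.ofRealCLM.integrable_comp (hcintT T hT).2⟩
    exact h1.mul_continuousOn (by rw [Set.uIcc_of_le hT]; exact hHcont x T hT)
  -- group identity applied pointwise
  have hgrp' : ∀ s t : ℝ, ∀ x : H, U (s + t) x = U s (U t x) := by
    intro s t x
    rw [hgrp s t]
    rfl
  -- the key inner-product identity
  have hinner2 : ∀ t : ℝ,
      (inner ℂ (U (τ t) y₁) (U (-(τ t)) y₂) : ℂ) = inner ℂ y₁ (U (-(2 * τ t)) y₂) := by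
    intro t
    rw [hadj (τ t) y₁ (U (-(τ t)) y₂)]
    congr 1
    rw [← hgrp' (-(τ t)) (-(τ t)) y₂]
    congr 1
    ring
  -- pointwise expansion of the two norms
  have hE2' : ∀ t : ℝ, ‖U (τ t) y₁ + U (-(τ t)) y₂‖ ^ 2
      = (‖y₁‖ ^ 2 + ‖y₂‖ ^ 2) + 2 * G t := by
    intro t
    rw [norm_add_sq (𝕜 := ℂ), hiso, hiso, hinner2 t]
    simp only [hGdef, RCLike.re_to_complex]
    ring
  have hE1' : ∀ t : ℝ,
      ‖(Complex.I * (c t : ℂ)) • U (τ t) y₁ - (Complex.I * (c t : ℂ)) • U (-(τ t)) y₂‖ ^ 2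
      = (c t) ^ 2 * ((‖y₁‖ ^ 2 + ‖y₂‖ ^ 2) - 2 * G t) := by
    intro t
    rw [← smul_sub, norm_smul, mul_pow, norm_sub_sq (𝕜 := ℂ), hiso, hiso, hinner2 t]
    have hnc : ‖Complex.I * (c t : ℂ)‖ = |c t| := by
      rw [norm_mul, Complex.norm_I, one_mul, Complex.norm_real, Real.norm_eq_abs]
    rw [hnc]
    simp only [hGdef, RCLike.re_to_complex, sq_abs]
    ring
  -- the Fourier-type integral Φ
  set Φ : H → ℝ → ℂ :=
    fun x T => ∫ t in (0:ℝ)..T, (c t : ℂ) * inner ℂ y₁ (U (-(2 * τ t)) x) with hPhidef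
  -- FTC bound for generators
  have hKey : ∀ v ∈ D, ∀ T : ℝ, 0 ≤ T → ‖Φ (S v) T‖ ≤ ‖y₁‖ * ‖v‖ := by
    intro v hv T hT
    set f : ℝ → ℂ := fun t => (innerSL ℂ y₁) (U (-(2 * τ t)) v) with hfdef
    set f' : ℝ → ℂ :=
      fun t => (-2 * Complex.I) * ((c t : ℂ) * inner ℂ y₁ (U (-(2 * τ t)) (S v))) with hf'def
    have Hd : ∀ t ∈ Set.Ioo (0:ℝ) T \ E, HasDerivAt f (f' t) t := by
      rintro t ⟨⟨ht0, htT⟩, htE⟩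
      have hchain : HasDerivAt (fun u : ℝ => -(2 * τ u)) (-(2 * c t)) t :=
        ((hτd t ht0 htE).const_mul 2).neg
      have hcomp : HasDerivAt ((fun s : ℝ => U s v) ∘ fun u : ℝ => -(2 * τ u))
          ((-(2 * c t)) • (Complex.I • U (-(2 * τ t)) (S v))) t :=
        HasDerivAt.scomp_of_eq (𝕜 := ℝ) (𝕜' := ℝ) (F := H) t (hder v hv (-(2 * τ t))) hchain rfl
      have hres := (((innerSL ℂ y₁).hasFDerivAt.restrictScalars ℝ).comp_hasDerivAt t hcomp :
        HasDerivAt (fun u : ℝ => (innerSL ℂ y₁) (U (-(2 * τ u)) v))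
          (((innerSL ℂ y₁).restrictScalars ℝ)
            ((-(2 * c t)) • (Complex.I • U (-(2 * τ t)) (S v)))) t)
      have heq : ((innerSL ℂ y₁).restrictScalars ℝ)
          ((-(2 * c t)) • (Complex.I • U (-(2 * τ t)) (S v))) = f' t := by
        show (inner ℂ y₁ ((-(2 * c t)) • (Complex.I • U (-(2 * τ t)) (S v))) : ℂ) = f' t
        rw [← smul_assoc, inner_smul_right, hf'def]
        have h9 : ((-(2 * c t)) • Complex.I : ℂ) = ((-(2 * c t) : ℝ) : ℂ) * Complex.I :=
          Complex.real_smul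
        rw [h9]
        push_cast
        ring
      rw [heq] at hres
      exact hres
    have Hc : ContinuousOn f (Set.Icc 0 T) := by
      have := continuousOn_const.inner (𝕜 := ℂ) (f := fun _ : ℝ => y₁) (hUτcont v T hT)
      simpa only [hfdef, innerSL_apply_apply] using this
    have Hi : IntervalIntegrable f' volume 0 T := (hintPhi (S v) T hT).const_mul _
    have hFTC := MeasureTheory.integral_eq_of_hasDerivAt_off_countable_of_le f f' hT
      hEcount Hc Hd Hi
    have hconst : (∫ t in (0:ℝ)..T, f' t) = (-2 * Complex.I) * Φ (S v) T := by
      rw [hPhidef]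
      exact intervalIntegral.integral_const_mul _ _
    rw [hconst] at hFTC
    have h2 : ‖(-2 * Complex.I) * Φ (S v) T‖ = 2 * ‖Φ (S v) T‖ := by
      rw [norm_mul]
      simp
    have h3 : ‖f T - f 0‖ ≤ ‖y₁‖ * ‖v‖ + ‖y₁‖ * ‖v‖ := by
      refine (norm_sub_le _ _).trans (add_le_add ?_ ?_) <;>
        · simp only [hfdef, innerSL_apply_apply]
          exact hCS v _
    have h4 : 2 * ‖Φ (S v) T‖ ≤ ‖y₁‖ * ‖v‖ + ‖y₁‖ * ‖v‖ := by
      rw [← h2, hFTC]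
      exact h3
    linarith
  -- the density/averaging argument
  have hPhiTend : Tendsto (fun T : ℝ => (1 / T) * ‖Φ y₂ T‖) atTop (𝓝 0) := by
    rw [NormedAddCommGroup.tendsto_nhds_zero]
    intro ε hε
    have hδ : (0:ℝ) < ε / (2 * (M * ‖y₁‖ + 1)) := by positivity
    obtain ⟨z, hzmem, hzd⟩ := hSdense.exists_dist_lt y₂ hδ
    obtain ⟨v, hvD, rfl⟩ := hzmem
    set d : ℝ := dist y₂ (S v) with hddef
    have hd0 : 0 ≤ d := dist_nonneg
    have hdiff : ∀ T : ℝ, 0 ≤ T → ‖Φ y₂ T - Φ (S v) T‖ ≤ M * ‖y₁‖ * d * T := by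
      intro T hT
      have h1 : Φ y₂ T - Φ (S v) T = ∫ t in (0:ℝ)..T,
          ((c t : ℂ) * inner ℂ y₁ (U (-(2 * τ t)) y₂)
            - (c t : ℂ) * inner ℂ y₁ (U (-(2 * τ t)) (S v))) := by
        rw [hPhidef]
        exact (intervalIntegral.integral_sub (hintPhi y₂ T hT) (hintPhi (S v) T hT)).symm
      rw [h1]
      refine le_trans (intervalIntegral.norm_integral_le_of_norm_le_const
        (C := M * (‖y₁‖ * d)) ?_) ?_
      · intro x hx
        rw [Set.uIoc_of_le hT] at hx
        rw [← mul_sub, ← inner_sub_right, ← map_sub]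
        rw [norm_mul]
        have hxc : ‖(c x : ℂ)‖ = |c x| := by rw [Complex.norm_real, Real.norm_eq_abs]
        rw [hxc]
        have h5 : ‖(inner ℂ y₁ (U (-(2 * τ x)) (y₂ - S v)) : ℂ)‖ ≤ ‖y₁‖ * ‖y₂ - S v‖ := hCS _ _
        rw [← dist_eq_norm] at h5
        exact mul_le_mul (hcb x hx.1.le) h5 (norm_nonneg _) hM0
      · rw [sub_zero, abs_of_nonneg hT]
        apply le_of_eq
        ring
    have hb : ∀ᶠ T in atTop,
        ‖(1 / T) * ‖Φ y₂ T‖‖ ≤ M * ‖y₁‖ * d + ‖y₁‖ * ‖v‖ * (1 / T) := by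
      filter_upwards [eventually_gt_atTop 0] with T hT0
      have h5 : ‖Φ y₂ T‖ ≤ M * ‖y₁‖ * d * T + ‖y₁‖ * ‖v‖ := by
        have h6 : Φ y₂ T = (Φ y₂ T - Φ (S v) T) + Φ (S v) T := by ring
        calc ‖Φ y₂ T‖ = ‖(Φ y₂ T - Φ (S v) T) + Φ (S v) T‖ := by rw [← h6]
          _ ≤ ‖Φ y₂ T - Φ (S v) T‖ + ‖Φ (S v) T‖ := norm_add_le _ _
          _ ≤ M * ‖y₁‖ * d * T + ‖y₁‖ * ‖v‖ :=
              add_le_add (hdiff T hT0.le) (hKey v hvD T hT0.le)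
      rw [Real.norm_eq_abs, abs_mul, abs_of_nonneg (by positivity : (0:ℝ) ≤ 1 / T),
        abs_of_nonneg (norm_nonneg _)]
      calc (1 / T) * ‖Φ y₂ T‖ ≤ (1 / T) * (M * ‖y₁‖ * d * T + ‖y₁‖ * ‖v‖) :=
            mul_le_mul_of_nonneg_left h5 (by positivity)
        _ = M * ‖y₁‖ * d + ‖y₁‖ * ‖v‖ * (1 / T) := by
            field_simp
    have hblim : Tendsto (fun T : ℝ => M * ‖y₁‖ * d + ‖y₁‖ * ‖v‖ * (1 / T)) atTop
        (𝓝 (M * ‖y₁‖ * d + ‖y₁‖ * ‖v‖ * 0)) :=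
      tendsto_const_nhds.add (tendsto_const_nhds.mul
        (tendsto_inv_atTop_zero.congr fun T => (one_div T).symm))
    have hlt : M * ‖y₁‖ * d + ‖y₁‖ * ‖v‖ * 0 < ε := by
      have h7 : d < ε / (2 * (M * ‖y₁‖ + 1)) := hzd
      have h8 : (0:ℝ) ≤ M * ‖y₁‖ := by positivity
      rw [mul_zero, add_zero]
      calc M * ‖y₁‖ * d ≤ (M * ‖y₁‖ + 1) * d := by nlinarith
        _ < (M * ‖y₁‖ + 1) * (ε / (2 * (M * ‖y₁‖ + 1))) :=
            mul_lt_mul_of_pos_left h7 (by positivity)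
        _ = ε / 2 := by
            field_simp
        _ < ε := by linarith
    filter_upwards [hb, hblim.eventually_lt_const hlt] with T h9 h10
    exact lt_of_le_of_lt h9 h10
  -- the ergodic limit
  have hZ : Tendsto (fun T : ℝ => (1 / T) * ∫ t in (0:ℝ)..T, c t * G t) atTop (𝓝 0) := by
    apply squeeze_zero_norm' ?_ hPhiTend
    filter_upwards [eventually_gt_atTop 0] with T hT0
    have h1 := Complex.reCLM.intervalIntegral_comp_comm (hintPhi y₂ T hT0.le)
    have h2 : (∫ t in (0:ℝ)..T, c t * G t)
        = ∫ t in (0:ℝ)..T, Complex.reCLM ((c t : ℂ) * inner ℂ y₁ (U (-(2 * τ t)) y₂)) := by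
      apply intervalIntegral.integral_congr
      intro t _
      simp [hGdef, Complex.re_ofReal_mul]
    have hre : (∫ t in (0:ℝ)..T, c t * G t) = (Φ y₂ T).re := by
      rw [h2, h1, hPhidef]
      rfl
    rw [Real.norm_eq_abs, hre, abs_mul, abs_of_nonneg (by positivity : (0:ℝ) ≤ 1 / T)]
    apply mul_le_mul_of_nonneg_left ?_ (by positivity)
    calc |(Φ y₂ T).re| ≤ ‖Φ y₂ T‖ := Complex.abs_re_le_norm _
      _ = ‖Φ y₂ T‖ := rfl
  -- Cesàro limits
  have hces2 : Tendsto (fun T : ℝ => (1 / T) * ∫ t in (0:ℝ)..T, (c t) ^ 2) atTop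
      (𝓝 (cinf ^ 2)) := by
    apply cesaro hintc2 (M := M ^ 2) ?_ (hcinf.pow 2)
    intro t ht
    rw [abs_pow]
    exact pow_le_pow_left₀ (abs_nonneg _) (hcb t ht) 2
  have hces3 : Tendsto (fun T : ℝ => (1 / T) * ∫ t in (0:ℝ)..T, (cinf - c t) * G t) atTop
      (𝓝 0) := by
    apply cesaro_zero hintcinfcG (M := (M + M) * K)
    · intro t ht
      rw [abs_mul]
      refine mul_le_mul ?_ (hGb t) (abs_nonneg _) (by positivity)
      calc |cinf - c t| ≤ |cinf| + |c t| := abs_sub _ _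
        _ ≤ M + M := add_le_add hMcinf (hcb t ht)
    · have h1 : Tendsto (fun t => |cinf - c t| * K) atTop (𝓝 0) := by
        have h2 : Tendsto (fun t => |cinf - c t| * K) atTop (𝓝 (|cinf - cinf| * K)) :=
          ((tendsto_const_nhds.sub hcinf).abs).mul_const K
        simpa using h2
      apply squeeze_zero_norm _ h1
      intro t
      rw [Real.norm_eq_abs, abs_mul]
      exact mul_le_mul_of_nonneg_left (hGb t) (abs_nonneg _)
  have hces4 : Tendsto (fun T : ℝ => (1 / T) * ∫ t in (0:ℝ)..T, ((c t) ^ 2 - cinf ^ 2) * G t)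
      atTop (𝓝 0) := by
    apply cesaro_zero hintc2cinfG (M := (M ^ 2 + M ^ 2) * K)
    · intro t ht
      rw [abs_mul]
      refine mul_le_mul ?_ (hGb t) (abs_nonneg _) (by positivity)
      calc |(c t) ^ 2 - cinf ^ 2| ≤ |(c t) ^ 2| + |cinf ^ 2| := abs_sub _ _
        _ ≤ M ^ 2 + M ^ 2 := add_le_add
            (by rw [abs_pow]; exact pow_le_pow_left₀ (abs_nonneg _) (hcb t ht) 2)
            (by rw [abs_pow]; exact pow_le_pow_left₀ (abs_nonneg _) hMcinf 2)
    · have h1 : Tendsto (fun t => |(c t) ^ 2 - cinf ^ 2| * K) atTop (𝓝 0) := by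
        have h2 : Tendsto (fun t => |(c t) ^ 2 - cinf ^ 2| * K) atTop
            (𝓝 (|cinf ^ 2 - cinf ^ 2| * K)) :=
          (((hcinf.pow 2).sub_const (cinf ^ 2)).abs).mul_const K
        simpa using h2
      apply squeeze_zero_norm _ h1
      intro t
      rw [Real.norm_eq_abs, abs_mul]
      exact mul_le_mul_of_nonneg_left (hGb t) (abs_nonneg _)
  -- limit of the average of G
  have hG0 : Tendsto (fun T : ℝ => (1 / T) * ∫ t in (0:ℝ)..T, G t) atTop (𝓝 0) := by
    have hsum := hZ.add hces3
    rw [add_zero] at hsum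
    have hcongr : (fun T : ℝ => ((1 / T) * ∫ t in (0:ℝ)..T, c t * G t)
          + (1 / T) * ∫ t in (0:ℝ)..T, (cinf - c t) * G t)
        =ᶠ[atTop] fun T : ℝ => cinf * ((1 / T) * ∫ t in (0:ℝ)..T, G t) := by
      filter_upwards [eventually_ge_atTop 0] with T hT
      rw [← mul_add, ← intervalIntegral.integral_add (hintcG T hT) (hintcinfcG T hT)]
      rw [intervalIntegral.integral_congr (g := fun t => cinf * G t)
        (fun t _ => by ring), intervalIntegral.integral_const_mul]
      ring
    have h2 := hsum.congr' hcongr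
    have h3 := h2.const_mul cinf⁻¹
    rw [mul_zero] at h3
    refine h3.congr fun T => ?_
    rw [inv_mul_cancel_left₀ hcne]
  have hc2G : Tendsto (fun T : ℝ => (1 / T) * ∫ t in (0:ℝ)..T, (c t) ^ 2 * G t) atTop (𝓝 0) := by
    have hsum := hces4.add (hG0.const_mul (cinf ^ 2))
    simp only [mul_zero, add_zero] at hsum
    apply hsum.congr'
    filter_upwards [eventually_ge_atTop 0] with T hT
    have h0 : cinf ^ 2 * ((1 / T) * ∫ t in (0:ℝ)..T, G t)
        = (1 / T) * ∫ t in (0:ℝ)..T, cinf ^ 2 * G t := by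
      rw [intervalIntegral.integral_const_mul]
      ring
    rw [h0, ← mul_add, ← intervalIntegral.integral_add (hintc2cinfG T hT)
      ((hintG T hT).const_mul (cinf ^ 2))]
    rw [intervalIntegral.integral_congr (g := fun t => (c t) ^ 2 * G t) (fun t _ => by ring)]
  -- conclusion
  refine ⟨?_, ?_, ne_of_gt (mul_pos (pow_pos hcinfpos 2) hNpos)⟩
  · have hA := (hces2.const_mul (‖y₁‖ ^ 2 + ‖y₂‖ ^ 2)).sub (hc2G.const_mul 2)
    rw [mul_zero, sub_zero] at hA
    have hA' : Tendsto (fun T : ℝ => (‖y₁‖ ^ 2 + ‖y₂‖ ^ 2)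
          * ((1 / T) * ∫ t in (0:ℝ)..T, (c t) ^ 2)
          - 2 * ((1 / T) * ∫ t in (0:ℝ)..T, (c t) ^ 2 * G t)) atTop
        (𝓝 (cinf ^ 2 * (‖y₁‖ ^ 2 + ‖y₂‖ ^ 2))) := by
      rw [mul_comm (cinf ^ 2)]
      exact hA
    apply hA'.congr'
    filter_upwards [eventually_ge_atTop 0] with T hT
    have h1 : (∫ t in (0:ℝ)..T, ‖(Complex.I * (c t : ℂ)) • U (τ t) y₁
          - (Complex.I * (c t : ℂ)) • U (-(τ t)) y₂‖ ^ 2)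
        = ∫ t in (0:ℝ)..T, ((‖y₁‖ ^ 2 + ‖y₂‖ ^ 2) * (c t) ^ 2 - 2 * ((c t) ^ 2 * G t)) :=
      intervalIntegral.integral_congr (fun t _ => by rw [hE1' t]; ring)
    rw [h1, intervalIntegral.integral_sub ((hintc2 T hT).const_mul _)
      ((hintc2G T hT).const_mul 2), intervalIntegral.integral_const_mul,
      intervalIntegral.integral_const_mul]
    ring
  · have hB' : Tendsto (fun T : ℝ => cinf ^ 2 * ((‖y₁‖ ^ 2 + ‖y₂‖ ^ 2)
          + 2 * ((1 / T) * ∫ t in (0:ℝ)..T, G t))) atTop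
        (𝓝 (cinf ^ 2 * (‖y₁‖ ^ 2 + ‖y₂‖ ^ 2))) := by
      have h1 := ((hG0.const_mul 2).const_add (‖y₁‖ ^ 2 + ‖y₂‖ ^ 2)).const_mul (cinf ^ 2)
      simpa using h1
    apply hB'.congr'
    filter_upwards [eventually_ge_atTop 1] with T hT
    have hT0 : (0:ℝ) < T := lt_of_lt_of_le one_pos hT
    have h1 : (∫ t in (0:ℝ)..T, ‖U (τ t) y₁ + U (-(τ t)) y₂‖ ^ 2)
        = ∫ t in (0:ℝ)..T, ((‖y₁‖ ^ 2 + ‖y₂‖ ^ 2) + 2 * G t) :=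
      intervalIntegral.integral_congr (fun t _ => hE2' t)
    rw [h1, intervalIntegral.integral_add
      (intervalIntegrable_const (μ := volume) (a := (0:ℝ)) (b := T)
        (c := ‖y₁‖ ^ 2 + ‖y₂‖ ^ 2))
      ((hintG T hT0.le).const_mul 2), intervalIntegral.integral_const,
      intervalIntegral.integral_const_mul]
    rw [smul_eq_mul, sub_zero]
    field_simp
end

section
/- Let H be a complex Hilbert space, A a non-negative injective self-adjoint operator, c : [0,∞) → ℝ of bounded variation with c₀ := inf_{t≥0} c(t) > 0, and b ∈ L¹(0,∞). Suppose λ > 0 and u_λ : [0,∞) → D(A) is a C² solution (with values in the range of the spectral projection E([0,λ)) of A) of u_λ'' + c(t)² A u_λ + b(t) u_λ' = 0 with c continuously differentiable. Define F_λ(t) = (1/2)‖u_λ'(t)‖² + (1/2)c(t)²‖A^{1/2}u_λ(t)‖². Then for all t ≥ S ≥ 0: F_λ(t) ≥ F_λ(S) · exp( -2‖b‖_{L¹(0,∞)} - (2/c₀)·Var(c;[0,∞)) ). -/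
open MeasureTheory Filter Topology

/-- On a short interval where the oscillation of `deriv c` is at most `ε`,
the integral of `|deriv c|` is at most `|c b - c a| + 2 ε (b - a)`. -/
lemma aux_interval_bound (c : ℝ → ℝ) (hc : ContDiff ℝ 1 c) {a b ε : ℝ} (hab : a ≤ b)
    (hε : 0 ≤ ε) (hosc : ∀ x ∈ Set.Icc a b, |deriv c x - deriv c a| ≤ ε) :
    ∫ x in a..b, |deriv c x| ≤ |c b - c a| + 2 * ε * (b - a) := by
  have hdc : Continuous (deriv c) := hc.continuous_deriv le_rfl
  have hint : IntervalIntegrable (fun x => |deriv c x|) volume a b :=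
    (hdc.abs).intervalIntegrable a b
  have h1 : ∫ x in a..b, |deriv c x| ≤ ∫ _x in a..b, (|deriv c a| + ε) := by
    apply intervalIntegral.integral_mono_on hab hint intervalIntegrable_const
    intro x hx
    have h := hosc x hx
    have h2 := abs_sub_abs_le_abs_sub (deriv c x) (deriv c a)
    linarith
  rw [intervalIntegral.integral_const, smul_eq_mul] at h1
  have h2 : c b - c a = ∫ x in a..b, deriv c x :=
    (intervalIntegral.integral_deriv_eq_sub
      (fun x _ => (hc.differentiable one_ne_zero).differentiableAt)
      (hdc.intervalIntegrable a b)).symm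
  have h3 : |∫ x in a..b, (deriv c x - deriv c a)| ≤ ε * |b - a| := by
    rw [← Real.norm_eq_abs]
    apply intervalIntegral.norm_integral_le_of_norm_le_const
    intro x hx
    rw [Set.uIoc_of_le hab] at hx
    rw [Real.norm_eq_abs]
    exact hosc x (Set.Ioc_subset_Icc_self hx)
  have h4 : ∫ x in a..b, (deriv c x - deriv c a) = (c b - c a) - (b - a) * deriv c a := by
    rw [intervalIntegral.integral_sub (hdc.intervalIntegrable a b) intervalIntegrable_const,
      intervalIntegral.integral_const, smul_eq_mul, ← h2]
  have habs : |b - a| = b - a := abs_of_nonneg (by linarith)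
  rw [h4, habs] at h3
  have h5 : (b - a) * |deriv c a| ≤ |c b - c a| + ε * (b - a) := by
    have h6 := abs_sub_abs_le_abs_sub ((b - a) * deriv c a) (c b - c a)
    rw [abs_mul, habs, abs_sub_comm ((b - a) * deriv c a) (c b - c a)] at h6
    linarith [abs_nonneg (c b - c a)]
  nlinarith [abs_nonneg (deriv c a)]

/-- For a `C¹` function, the integral of `|deriv c|` over `[s,t]` is bounded by the
total variation of `c` on `[s,t]`. -/
lemma integral_abs_deriv_le_evariation (c : ℝ → ℝ) (hc : ContDiff ℝ 1 c) {s t : ℝ}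
    (hst : s ≤ t) (hfin : eVariationOn c (Set.Icc s t) ≠ ⊤) :
    ∫ x in s..t, |deriv c x| ≤ (eVariationOn c (Set.Icc s t)).toReal := by
  rcases eq_or_lt_of_le hst with rfl | hlt
  · simp
  have hdc : Continuous (deriv c) := hc.continuous_deriv le_rfl
  apply le_of_forall_pos_le_add
  intro ε hε
  set ε' : ℝ := ε / (2 * (t - s)) with hε'def
  have hε' : 0 < ε' := div_pos hε (by linarith)
  have huc : UniformContinuousOn (deriv c) (Set.Icc s t) :=
    isCompact_Icc.uniformContinuousOn_of_continuous hdc.continuousOn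
  obtain ⟨δ, hδ, hδ'⟩ := Metric.uniformContinuousOn_iff.mp huc ε' hε'
  obtain ⟨n, hn⟩ := exists_nat_gt ((t - s) / δ)
  have hn0 : 0 < n := by
    have h : (0:ℝ) < (t - s) / δ := div_pos (by linarith) hδ
    exact_mod_cast Nat.cast_pos.mp (lt_trans h hn)
  have hncast : (0:ℝ) < (n:ℝ) := Nat.cast_pos.mpr hn0
  set d : ℝ := (t - s) / n with hddef
  have hd0 : 0 < d := div_pos (by linarith) hncast
  have hnd : (n:ℝ) * d = t - s := by rw [hddef]; field_simp [hncast.ne']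
  have hdδ : d < δ := by
    rw [hddef, div_lt_iff₀ hncast]
    have := (div_lt_iff₀ hδ).mp hn
    linarith [mul_comm δ (n:ℝ)]
  set a : ℕ → ℝ := fun i => s + i * d with ha
  have haii : ∀ i : ℕ, a (i+1) - a i = d := by
    intro i; simp only [ha]; push_cast; ring
  have hmem : ∀ i ≤ n, a i ∈ Set.Icc s t := by
    intro i hi
    constructor
    · have : (0:ℝ) ≤ (i:ℝ) * d := mul_nonneg (Nat.cast_nonneg i) hd0.le
      simp only [ha]; linarith
    · have h1 : (i:ℝ) * d ≤ (n:ℝ) * d :=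
        mul_le_mul_of_nonneg_right (Nat.cast_le.mpr hi) hd0.le
      simp only [ha]; linarith
  have ha0 : a 0 = s := by simp [ha]
  have han : a n = t := by simp only [ha]; linarith
  have hsplit : ∫ x in s..t, |deriv c x| =
      ∑ i ∈ Finset.range n, ∫ x in a i..a (i+1), |deriv c x| := by
    rw [intervalIntegral.sum_integral_adjacent_intervals
      (fun k _ => (hdc.abs).intervalIntegrable _ _), ha0, han]
  have hper : ∀ i ∈ Finset.range n,
      ∫ x in a i..a (i+1), |deriv c x| ≤ |c (a (i+1)) - c (a i)| + 2 * ε' * d := by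
    intro i hi
    have hin : i < n := Finset.mem_range.mp hi
    have hlen := haii i
    have h1 : a i ≤ a (i+1) := by linarith [hd0.le]
    have hmi := hmem i hin.le
    have hmi1 := hmem (i+1) hin
    have hb := aux_interval_bound c hc h1 hε'.le (fun x hx => by
      have hxst : x ∈ Set.Icc s t :=
        ⟨le_trans hmi.1 hx.1, le_trans hx.2 hmi1.2⟩
      have hdist : dist x (a i) < δ := by
        rw [Real.dist_eq, abs_of_nonneg (by linarith [hx.1])]
        linarith [hx.2]
      have := hδ' x hxst (a i) hmi hdist
      rw [Real.dist_eq] at this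
      exact this.le)
    rw [hlen] at hb
    exact hb
  have hvar : ∑ i ∈ Finset.range n, |c (a (i+1)) - c (a i)| ≤
      (eVariationOn c (Set.Icc s t)).toReal := by
    set v : ℕ → ℝ := fun i => a (min i n) with hv
    have hu : Monotone v := by
      intro i j hij
      simp only [hv, ha]
      have h1 : ((min i n : ℕ) : ℝ) ≤ ((min j n : ℕ) : ℝ) :=
        Nat.cast_le.mpr (min_le_min hij (le_refl n))
      have := mul_le_mul_of_nonneg_right h1 hd0.le
      linarith
    have hus : ∀ i, v i ∈ Set.Icc s t := fun i => hmem _ (min_le_right _ _)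
    have hsum := eVariationOn.sum_le (f := c) (n := n) hu hus
    have heach : ∀ i ∈ Finset.range n,
        edist (c (v (i+1))) (c (v i)) = ENNReal.ofReal (|c (a (i+1)) - c (a i)|) := by
      intro i hi
      have hin : i < n := Finset.mem_range.mp hi
      have e1 : min i n = i := min_eq_left hin.le
      have e2 : min (i+1) n = i+1 := min_eq_left hin
      simp only [hv, e1, e2, edist_dist, Real.dist_eq]
    rw [Finset.sum_congr rfl heach] at hsum
    rw [← ENNReal.ofReal_sum_of_nonneg (fun i _ => abs_nonneg _)] at hsum
    have := ENNReal.toReal_mono hfin hsum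
    rwa [ENNReal.toReal_ofReal (Finset.sum_nonneg (fun i _ => abs_nonneg _))] at this
  have hsum2 : ∑ i ∈ Finset.range n, (|c (a (i+1)) - c (a i)| + 2 * ε' * d) =
      (∑ i ∈ Finset.range n, |c (a (i+1)) - c (a i)|) + n * (2 * ε' * d) := by
    rw [Finset.sum_add_distrib, Finset.sum_const, Finset.card_range, nsmul_eq_mul]
  have hεeq : (n:ℝ) * (2 * ε' * d) = ε := by
    have : (n:ℝ) * (2 * ε' * d) = 2 * ε' * ((n:ℝ) * d) := by ring
    rw [this, hnd, hε'def, show 2 * (ε / (2 * (t - s))) * (t - s) = ε / (2 * (t - s)) * (2 * (t - s)) by ring,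
      div_mul_cancel₀ _ (by linarith : (0:ℝ) < 2 * (t - s)).ne']
  calc ∫ x in s..t, |deriv c x|
      = ∑ i ∈ Finset.range n, ∫ x in a i..a (i+1), |deriv c x| := hsplit
    _ ≤ ∑ i ∈ Finset.range n, (|c (a (i+1)) - c (a i)| + 2 * ε' * d) :=
        Finset.sum_le_sum hper
    _ = (∑ i ∈ Finset.range n, |c (a (i+1)) - c (a i)|) + n * (2 * ε' * d) := hsum2
    _ ≤ (eVariationOn c (Set.Icc s t)).toReal + ε := by rw [hεeq]; linarith [hvar]

set_option maxHeartbeats 1000000 in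
/-- Non-decay of the energy of spectrally localized solutions. Let `A` be a
non-negative injective self-adjoint operator on a complex Hilbert space, with square
root `S = A^{1/2}` satisfying `⟪S x, S y⟫ = ⟪A x, y⟫` for `x ∈ D(A)`, `y ∈ D(S)`.
Let `c` be `C¹`, of bounded variation on `[0,∞)`, with `c₀ := inf c > 0`, and
`b ∈ L¹(0,∞)`. Let `u` be a `C²` solution of `u'' + c(t)² A u + b(t) u' = 0` with
values in the range of the spectral projection `E([0,λ))` (so that
`‖A u(t)‖ ≤ √λ ‖S u(t)‖` and `S ∘ u` is differentiable with derivative `S ∘ u'`).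
Then the energy `F(t) = ½‖u'(t)‖² + ½ c(t)²‖S u(t)‖²` satisfies, for `t ≥ S ≥ 0`,
`F(t) ≥ F(S) exp(-2‖b‖_{L¹} - (2/c₀) Var(c;[0,∞)))`. -/
theorem stmt12 {H : Type*} [NormedAddCommGroup H] [InnerProductSpace ℂ H]
    [CompleteSpace H]
    (DA DS : Set H) (A S : H → H)
    (hAS : ∀ x ∈ DA, ∀ y ∈ DS, (inner ℂ (S x) (S y) : ℂ) = inner ℂ (A x) y)
    (c : ℝ → ℝ) (hc1 : ContDiff ℝ 1 c)
    (hbv : BoundedVariationOn c (Set.Ici 0))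
    (c₀ : ℝ) (hc₀ : 0 < c₀) (hcge : ∀ t : ℝ, 0 ≤ t → c₀ ≤ c t)
    (b : ℝ → ℝ) (hb : IntegrableOn b (Set.Ioi 0))
    (lam : ℝ) (hlam : 0 < lam)
    (u u' u'' : ℝ → H)
    (hu1 : ∀ t : ℝ, HasDerivAt u (u' t) t)
    (hu2 : ∀ t : ℝ, HasDerivAt u' (u'' t) t)
    (hudom : ∀ t : ℝ, u t ∈ DA) (hu'dom : ∀ t : ℝ, u' t ∈ DS)
    (hSu : ∀ t : ℝ, HasDerivAt (fun r : ℝ => S (u r)) (S (u' t)) t)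
    (heq : ∀ t : ℝ, u'' t + (c t) ^ 2 • A (u t) + b t • u' t = 0)
    (hspec : ∀ t : ℝ, ‖A (u t)‖ ≤ Real.sqrt lam * ‖S (u t)‖) :
    ∀ s t : ℝ, 0 ≤ s → s ≤ t →
      (1 / 2) * ‖u' t‖ ^ 2 + (1 / 2) * (c t) ^ 2 * ‖S (u t)‖ ^ 2 ≥
        ((1 / 2) * ‖u' s‖ ^ 2 + (1 / 2) * (c s) ^ 2 * ‖S (u s)‖ ^ 2) *
          Real.exp (-2 * (∫ σ in Set.Ioi (0:ℝ), |b σ|)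
            - (2 / c₀) * (eVariationOn c (Set.Ici 0)).toReal) := by
  intro s t hs hst
  have hcc : Continuous c := hc1.continuous
  have hc'c : Continuous (deriv c) := hc1.continuous_deriv le_rfl
  have hcd : ∀ x : ℝ, HasDerivAt c (deriv c x) x := fun x =>
    ((hc1.differentiable one_ne_zero) x).hasDerivAt
  have hu'c : Continuous u' := continuous_iff_continuousAt.mpr fun τ => (hu2 τ).continuousAt
  have hSuc : Continuous (fun r => S (u r)) :=
    continuous_iff_continuousAt.mpr fun τ => (hSu τ).continuousAt
  set F : ℝ → ℝ := fun τ => 1 / 2 * ‖u' τ‖ ^ 2 + 1 / 2 * (c τ) ^ 2 * ‖S (u τ)‖ ^ 2 with hFdef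
  have hFc : Continuous F :=
    (continuous_const.mul ((hu'c.norm).pow 2)).add
      ((continuous_const.mul (hcc.pow 2)).mul ((hSuc.norm).pow 2))
  have hFpos : ∀ τ, 0 ≤ F τ := fun τ => by simp only [hFdef]; positivity
  have hFderiv : ∀ τ, HasDerivAt F
      (-(b τ) * ‖u' τ‖ ^ 2 + c τ * deriv c τ * ‖S (u τ)‖ ^ 2) τ := by
    intro τ
    have e1 : HasDerivAt (fun r : ℝ => ‖u' r‖ ^ 2)
        (2 * RCLike.re (inner ℂ (u'' τ) (u' τ) : ℂ)) τ := by
      have h := HasDerivAt.inner ℂ (hu2 τ) (hu2 τ)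
      have h3 : HasDerivAt (fun r : ℝ => RCLike.re (inner ℂ (u' r) (u' r) : ℂ))
          (RCLike.re ((inner ℂ (u' τ) (u'' τ) : ℂ) + (inner ℂ (u'' τ) (u' τ) : ℂ))) τ :=
        (RCLike.reCLM (K := ℂ)).hasFDerivAt.comp_hasDerivAt τ h
      have hfun : (fun r : ℝ => RCLike.re (inner ℂ (u' r) (u' r) : ℂ))
          = fun r : ℝ => ‖u' r‖ ^ 2 := funext fun r => inner_self_eq_norm_sq _
      rw [hfun] at h3
      convert h3 using 1
      rw [map_add, inner_re_symm]
      ring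
    have e2 : HasDerivAt (fun r : ℝ => ‖S (u r)‖ ^ 2)
        (2 * RCLike.re (inner ℂ (S (u' τ)) (S (u τ)) : ℂ)) τ := by
      have h := HasDerivAt.inner ℂ (hSu τ) (hSu τ)
      have h3 : HasDerivAt (fun r : ℝ => RCLike.re (inner ℂ (S (u r)) (S (u r)) : ℂ))
          (RCLike.re ((inner ℂ (S (u τ)) (S (u' τ)) : ℂ) + (inner ℂ (S (u' τ)) (S (u τ)) : ℂ))) τ :=
        (RCLike.reCLM (K := ℂ)).hasFDerivAt.comp_hasDerivAt τ h
      have hfun : (fun r : ℝ => RCLike.re (inner ℂ (S (u r)) (S (u r)) : ℂ))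
          = fun r : ℝ => ‖S (u r)‖ ^ 2 := funext fun r => inner_self_eq_norm_sq _
      rw [hfun] at h3
      convert h3 using 1
      rw [map_add, inner_re_symm]
      ring
    have e3 : HasDerivAt (fun r : ℝ => (c r) ^ 2) (2 * c τ * deriv c τ) τ := by
      simpa using (hcd τ).fun_pow 2
    have e4 := (e1.const_mul (1/2 : ℝ)).add ((e3.mul e2).const_mul (1/2 : ℝ))
    have hFeq : F = fun r : ℝ => 1 / 2 * ‖u' r‖ ^ 2 + 1 / 2 * ((c r) ^ 2 * ‖S (u r)‖ ^ 2) := by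
      funext r; simp only [hFdef]; ring
    rw [hFeq]
    refine e4.congr_deriv ?_
    have hu''eq : u'' τ = -((c τ) ^ 2 • A (u τ)) - b τ • u' τ := by
      have h : u'' τ + ((c τ) ^ 2 • A (u τ) + b τ • u' τ) = 0 := by
        rw [← add_assoc]; exact heq τ
      rw [add_eq_zero_iff_eq_neg] at h
      rw [h, neg_add, sub_eq_add_neg]
    have hAu : (inner ℂ (A (u τ)) (u' τ) : ℂ) = (inner ℂ (S (u τ)) (S (u' τ)) : ℂ) :=
      (hAS (u τ) (hudom τ) (u' τ) (hu'dom τ)).symm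
    have hre1 : RCLike.re (inner ℂ (A (u τ)) (u' τ) : ℂ)
        = RCLike.re (inner ℂ (S (u' τ)) (S (u τ)) : ℂ) := by
      rw [hAu, inner_re_symm]
    have hre2 : RCLike.re (inner ℂ (u' τ) (u' τ) : ℂ) = ‖u' τ‖ ^ 2 :=
      inner_self_eq_norm_sq _
    have hbre : RCLike.re (inner ℂ (u'' τ) (u' τ) : ℂ)
        = -((c τ) ^ 2 * RCLike.re (inner ℂ (S (u' τ)) (S (u τ)) : ℂ)) - b τ * ‖u' τ‖ ^ 2 := by
      rw [hu''eq, inner_sub_left, inner_neg_left,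
        RCLike.real_smul_eq_coe_smul (K := ℂ) ((c τ) ^ 2),
        RCLike.real_smul_eq_coe_smul (K := ℂ) (b τ),
        inner_smul_left, inner_smul_left, RCLike.conj_ofReal, RCLike.conj_ofReal,
        map_sub, map_neg]
      simp only [RCLike.mul_re, RCLike.ofReal_re, RCLike.ofReal_im, zero_mul, sub_zero]
      rw [hre1, hre2]
    rw [hbre]
    ring
  set B : ℝ := ∫ σ in Set.Ioi (0:ℝ), |b σ| with hBdef
  set V : ℝ := (eVariationOn c (Set.Ici 0)).toReal with hVdef
  set K : ℝ := 2 * B + 2 / c₀ * V with hKdef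
  have hIccsub : Set.Icc s t ⊆ Set.Ici (0:ℝ) := fun x hx => le_trans hs hx.1
  have hIocsub : Set.Ioc s t ⊆ Set.Ioi (0:ℝ) := fun x hx => lt_of_le_of_lt hs hx.1
  have hfin' : eVariationOn c (Set.Icc s t) ≠ ⊤ :=
    ne_top_of_le_ne_top hbv (eVariationOn.mono c hIccsub)
  have hbi : IntervalIntegrable b volume s t := by
    rw [intervalIntegrable_iff_integrableOn_Ioc_of_le hst]
    exact hb.mono_set hIocsub
  have hexp : -2 * B - 2 / c₀ * V = -K := by rw [hKdef]; ring
  rw [ge_iff_le, hexp]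
  have hsuf : ∀ δ : ℝ, 0 < δ → F s * Real.exp (-K) ≤ F t + δ := by
    intro δ hδ
    set P : ℝ → ℝ := fun τ => F τ + δ with hPdef
    have hPpos : ∀ τ, 0 < P τ := fun τ => by
      have := hFpos τ; simp only [hPdef]; linarith
    have hPc : Continuous P := hFc.add continuous_const
    have hPderiv : ∀ τ, HasDerivAt P
        (-(b τ) * ‖u' τ‖ ^ 2 + c τ * deriv c τ * ‖S (u τ)‖ ^ 2) τ :=
      fun τ => (hFderiv τ).add_const δ
    have hlogderiv : ∀ τ, HasDerivAt (fun r => Real.log (P r))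
        ((-(b τ) * ‖u' τ‖ ^ 2 + c τ * deriv c τ * ‖S (u τ)‖ ^ 2) / P τ) τ :=
      fun τ => (hPderiv τ).log (hPpos τ).ne'
    have hgi : IntervalIntegrable
        (fun τ => (-(b τ) * ‖u' τ‖ ^ 2 + c τ * deriv c τ * ‖S (u τ)‖ ^ 2) / P τ)
        volume s t := by
      have h1 : IntervalIntegrable (fun τ => b τ * (-‖u' τ‖ ^ 2 / P τ)) volume s t :=
        hbi.mul_continuousOn (Continuous.continuousOn (by
          exact ((hu'c.norm.pow 2).neg).div hPc fun τ => (hPpos τ).ne'))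
      have h2 : IntervalIntegrable
          (fun τ => c τ * deriv c τ * ‖S (u τ)‖ ^ 2 / P τ) volume s t :=
        Continuous.intervalIntegrable (by
          exact ((hcc.mul hc'c).mul (hSuc.norm.pow 2)).div hPc fun τ => (hPpos τ).ne') s t
      have heqf : (fun τ => (-(b τ) * ‖u' τ‖ ^ 2 + c τ * deriv c τ * ‖S (u τ)‖ ^ 2) / P τ)
          = fun τ => b τ * (-‖u' τ‖ ^ 2 / P τ) + c τ * deriv c τ * ‖S (u τ)‖ ^ 2 / P τ := by
        funext τ
        field_simp
      rw [heqf]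
      exact h1.add h2
    have hftc : ∫ τ in s..t, (-(b τ) * ‖u' τ‖ ^ 2 + c τ * deriv c τ * ‖S (u τ)‖ ^ 2) / P τ
        = Real.log (P t) - Real.log (P s) :=
      intervalIntegral.integral_eq_sub_of_hasDerivAt (fun τ _ => hlogderiv τ) hgi
    have hlowint : IntervalIntegrable (fun τ => -(2 * |b τ| + 2 / c₀ * |deriv c τ|))
        volume s t :=
      (((hbi.abs).const_mul 2).add ((hc'c.abs.intervalIntegrable s t).const_mul (2 / c₀))).neg
    have hlow : ∀ τ ∈ Set.Icc s t, -(2 * |b τ| + 2 / c₀ * |deriv c τ|)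
        ≤ (-(b τ) * ‖u' τ‖ ^ 2 + c τ * deriv c τ * ‖S (u τ)‖ ^ 2) / P τ := by
      intro τ hτ
      have hτ0 : (0:ℝ) ≤ τ := le_trans hs hτ.1
      have hcτ : c₀ ≤ c τ := hcge τ hτ0
      have hP := hPpos τ
      rw [le_div_iff₀ hP]
      have hF2 : ‖u' τ‖ ^ 2 ≤ 2 * P τ := by
        have h0 : 0 ≤ (c τ) ^ 2 * ‖S (u τ)‖ ^ 2 := by positivity
        simp only [hPdef, hFdef]
        nlinarith
      have hF3 : c τ * ‖S (u τ)‖ ^ 2 ≤ 2 / c₀ * P τ := by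
        have h1 : (c τ) ^ 2 * ‖S (u τ)‖ ^ 2 ≤ 2 * P τ := by
          have h0 : 0 ≤ ‖u' τ‖ ^ 2 := sq_nonneg _
          simp only [hPdef, hFdef]
          nlinarith
        rw [div_mul_eq_mul_div, le_div_iff₀ hc₀]
        nlinarith [sq_nonneg (‖S (u τ)‖)]
      have hb1 : -(2 * |b τ|) * P τ ≤ -(b τ) * ‖u' τ‖ ^ 2 := by
        have p1 : 0 ≤ (|b τ| - b τ) * ‖u' τ‖ ^ 2 :=
          mul_nonneg (by linarith [le_abs_self (b τ)]) (sq_nonneg _)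
        have p2 : 0 ≤ |b τ| * (2 * P τ - ‖u' τ‖ ^ 2) :=
          mul_nonneg (abs_nonneg _) (by linarith)
        nlinarith
      have hb2 : -(2 / c₀ * |deriv c τ|) * P τ ≤ c τ * deriv c τ * ‖S (u τ)‖ ^ 2 := by
        have p1 : 0 ≤ (|deriv c τ| + deriv c τ) * (c τ * ‖S (u τ)‖ ^ 2) :=
          mul_nonneg (by linarith [neg_abs_le (deriv c τ)])
            (mul_nonneg (le_trans hc₀.le hcτ) (sq_nonneg _))
        have p2 : 0 ≤ |deriv c τ| * (2 / c₀ * P τ - c τ * ‖S (u τ)‖ ^ 2) :=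
          mul_nonneg (abs_nonneg _) (by linarith)
        nlinarith
      calc -(2 * |b τ| + 2 / c₀ * |deriv c τ|) * P τ
          = -(2 * |b τ|) * P τ + -(2 / c₀ * |deriv c τ|) * P τ := by ring
        _ ≤ -b τ * ‖u' τ‖ ^ 2 + c τ * deriv c τ * ‖S (u τ)‖ ^ 2 := add_le_add hb1 hb2
    have hmono := intervalIntegral.integral_mono_on hst hlowint hgi hlow
    have hsplitint : ∫ τ in s..t, -(2 * |b τ| + 2 / c₀ * |deriv c τ|)
        = -(2 * ∫ τ in s..t, |b τ|) - 2 / c₀ * ∫ τ in s..t, |deriv c τ| := by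
      rw [intervalIntegral.integral_neg, intervalIntegral.integral_add
        ((hbi.abs).const_mul 2) ((hc'c.abs.intervalIntegrable s t).const_mul (2 / c₀)),
        intervalIntegral.integral_const_mul, intervalIntegral.integral_const_mul]
      ring
    have hbint : ∫ τ in s..t, |b τ| ≤ B := by
      rw [intervalIntegral.integral_of_le hst]
      exact setIntegral_mono_set hb.abs (ae_of_all _ fun x => abs_nonneg _)
        (HasSubset.Subset.eventuallyLE hIocsub)
    have hcint : ∫ τ in s..t, |deriv c τ| ≤ V :=
      le_trans (integral_abs_deriv_le_evariation c hc1 hst hfin')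
        (ENNReal.toReal_mono hbv (eVariationOn.mono c hIccsub))
    have hlog : -K ≤ Real.log (P t) - Real.log (P s) := by
      rw [← hftc]
      refine le_trans ?_ hmono
      rw [hsplitint, hKdef]
      have h1 : 2 * ∫ τ in s..t, |b τ| ≤ 2 * B := by linarith
      have h2 : 2 / c₀ * ∫ τ in s..t, |deriv c τ| ≤ 2 / c₀ * V := by
        have := div_nonneg (by norm_num : (0:ℝ) ≤ 2) hc₀.le
        exact mul_le_mul_of_nonneg_left hcint this
      linarith
    have hPineq : P s * Real.exp (-K) ≤ P t := by
      have h := Real.exp_le_exp.mpr (by linarith : Real.log (P s) + -K ≤ Real.log (P t))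
      rw [Real.exp_add, Real.exp_log (hPpos s), Real.exp_log (hPpos t)] at h
      exact h
    calc F s * Real.exp (-K) ≤ P s * Real.exp (-K) := by
          have : F s ≤ P s := by simp only [hPdef]; linarith
          exact mul_le_mul_of_nonneg_right this (Real.exp_nonneg _)
      _ ≤ P t := hPineq
      _ = F t + δ := rfl
  exact le_of_forall_pos_le_add hsuf
end
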